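/- arXiv:1602.08907 — 4 statements merged into one kernel-verified Lean document; each statement's English description precedes it below -/
import Mathlib

section
/- For all integers a, b with 1 ≤ a ≤ b, there exists a finite tree T (a finite connected acyclic simple graph) such that τ(T) = a and β_p(T) = b. -/
open Classical SimpleGraph

noncomputable section

/-- The distance from a vertex to a set of vertices. -/
def setDist {V : Type*} (G : SimpleGraph V) (u : V) (S : Set V) : ℕ :=
  sInf ((G.dist u) '' S)

/-- A locating partition of a graph: a partition of the vertex set such that every
vertex is uniquely determined by its vector of distances to the parts. -/
def IsLocatingPartition {V : Type*} (G : SimpleGraph V) (P : Set (Set V)) : Prop :=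
  Setoid.IsPartition P ∧
    ∀ u v : V, (∀ S ∈ P, setDist G u S = setDist G v S) → u = v

/-- The partition dimension: the minimum cardinality of a locating partition. -/
def partitionDim {V : Type*} (G : SimpleGraph V) : ℕ :=
  sInf {k | ∃ P : Set (Set V), IsLocatingPartition G P ∧ P.ncard = k}

/-- Two vertices are twins if they have the same neighbors other than themselves. -/
def IsTwin {V : Type*} (G : SimpleGraph V) (u v : V) : Prop :=
  G.neighborSet u \ {v} = G.neighborSet v \ {u}

/-- The twin class of a vertex. -/
def twinClass {V : Type*} (G : SimpleGraph V) (u : V) : Set V :=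
  {v | IsTwin G u v}

/-- The twin number: the maximum cardinality of a twin class. -/
def twinNumber {V : Type*} (G : SimpleGraph V) : ℕ :=
  sSup {k | ∃ u : V, (twinClass G u).ncard = k}

namespace TwinTree

/-- Vertices of the tree: a center, `a` twin leaves, and legs (mid + leaf) indexed by `J`. -/
inductive Vtx (a : ℕ) (J : Type) : Type
  | c : Vtx a J
  | x : Fin a → Vtx a J
  | m : J → Vtx a J
  | l : J → Vtx a J
  deriving DecidableEq

instance (a : ℕ) (J : Type) [Fintype J] [DecidableEq J] : Fintype (Vtx a J) := by
  classical
  exact Fintype.ofSurjective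
    (fun z : (Unit ⊕ Fin a) ⊕ (J ⊕ J) =>
      match z with
      | .inl (.inl _) => Vtx.c
      | .inl (.inr s) => Vtx.x s
      | .inr (.inl j) => Vtx.m j
      | .inr (.inr j) => Vtx.l j)
    (by rintro (_ | s | j | j)
        exacts [⟨.inl (.inl ()), rfl⟩, ⟨.inl (.inr s), rfl⟩, ⟨.inr (.inl j), rfl⟩,
          ⟨.inr (.inr j), rfl⟩])

variable {a : ℕ} {J : Type}

/-- The tree metric. -/
def D : Vtx a J → Vtx a J → ℕ
  | .c, .c => 0
  | .c, .x _ => 1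
  | .c, .m _ => 1
  | .c, .l _ => 2
  | .x _, .c => 1
  | .x s, .x t => if s = t then 0 else 2
  | .x _, .m _ => 2
  | .x _, .l _ => 3
  | .m _, .c => 1
  | .m _, .x _ => 2
  | .m j, .m k => if j = k then 0 else 2
  | .m j, .l k => if j = k then 1 else 3
  | .l _, .c => 2
  | .l _, .x _ => 3
  | .l j, .m k => if j = k then 1 else 3
  | .l j, .l k => if j = k then 0 else 4

lemma D_self (u : Vtx a J) : D u u = 0 := by cases u <;> simp [D]

lemma D_comm (u v : Vtx a J) : D u v = D v u := by
  cases u <;> cases v <;> simp [D, eq_comm]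

lemma D_pos {u v : Vtx a J} (h : u ≠ v) : 1 ≤ D u v := by
  cases u <;> cases v <;> simp_all [D] <;> (try split_ifs) <;> simp_all <;> omega

/-- The graph. -/
def G (a : ℕ) (J : Type) : SimpleGraph (Vtx a J) where
  Adj u v := D u v = 1
  symm.symm u v h := by show D v u = 1; rwa [D_comm]
  loopless.irrefl u h := by simp [D_self] at h

lemma adj_iff {u v : Vtx a J} : (G a J).Adj u v ↔ D u v = 1 := Iff.rfl

lemma adj_cx (s : Fin a) : (G a J).Adj .c (.x s) := by simp [adj_iff, D]
lemma adj_cm (j : J) : (G a J).Adj .c (.m j) := by simp [adj_iff, D]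
lemma adj_ml (j : J) : (G a J).Adj (.m j) (.l j) := by simp [adj_iff, D]

lemma adj_c_iff {v : Vtx a J} : (G a J).Adj .c v ↔ (∃ s, v = .x s) ∨ (∃ j, v = .m j) := by
  cases v <;> simp [adj_iff, D]

lemma adj_x_iff {s : Fin a} {v : Vtx a J} : (G a J).Adj (.x s) v ↔ v = .c := by
  cases v <;> simp [adj_iff, D] <;> split_ifs <;> simp_all

lemma adj_m_iff {j : J} {v : Vtx a J} : (G a J).Adj (.m j) v ↔ v = .c ∨ v = .l j := by
  cases v with
  | c => simp [adj_iff, D]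
  | x s => simp [adj_iff, D]
  | m k => simp only [adj_iff, D]; split_ifs <;> simp_all [ne_comm]
  | l k => simp only [adj_iff, D]; split_ifs <;> simp_all [ne_comm]

lemma adj_l_iff {j : J} {v : Vtx a J} : (G a J).Adj (.l j) v ↔ v = .m j := by
  cases v with
  | c => simp [adj_iff, D]
  | x s => simp [adj_iff, D]
  | m k => simp only [adj_iff, D]; split_ifs <;> simp_all [ne_comm]
  | l k => simp only [adj_iff, D]; split_ifs <;> simp_all [ne_comm]

/-- Walk to the center. -/
def wc : (v : Vtx a J) → (G a J).Walk v .c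
  | .c => .nil
  | .x s => .cons ((adj_cx s).symm) .nil
  | .m j => .cons ((adj_cm j).symm) .nil
  | .l j => .cons ((adj_ml j).symm) (.cons ((adj_cm j).symm) .nil)

def lvl : Vtx a J → ℕ
  | .c => 0
  | .x _ => 1
  | .m _ => 1
  | .l _ => 2

lemma length_wc (v : Vtx a J) : (wc v).length = lvl v := by cases v <;> rfl

lemma connected : (G a J).Connected := by
  rw [connected_iff]
  exact ⟨fun u v => ((wc u).append (wc v).reverse).reachable, ⟨.c⟩⟩

lemma D_triangle_adj {u w : Vtx a J} (h : (G a J).Adj u w) (v : Vtx a J) :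
    D u v ≤ 1 + D w v := by
  rw [adj_iff] at h
  cases u <;> cases w <;> cases v <;>
    simp_all only [D] <;> (try split_ifs) <;> (try simp_all) <;> omega

lemma D_le_length {u v : Vtx a J} (p : (G a J).Walk u v) : D u v ≤ p.length := by
  induction p with
  | nil => simp [D_self]
  | cons h q ih =>
    calc D _ _ ≤ 1 + D _ _ := D_triangle_adj h _
    _ ≤ 1 + q.length := by omega
    _ = _ := by simp [SimpleGraph.Walk.length_cons]; omega

lemma dist_eq (u v : Vtx a J) : (G a J).dist u v = D u v := by
  refine le_antisymm ?_ ?_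
  · rcases eq_or_ne u v with rfl | huv
    · simp [D_self]
    · by_cases hml : D u v = 1
      · have : (G a J).Adj u v := hml
        calc (G a J).dist u v ≤ (SimpleGraph.Walk.cons this .nil).length := dist_le _
        _ = 1 := by simp
        _ = D u v := hml.symm
      · have hlen : D u v = lvl u + lvl v := by
          cases u <;> cases v <;> simp_all [D, lvl] <;> (try split_ifs) <;> simp_all <;> omega
        calc (G a J).dist u v ≤ ((wc u).append (wc v).reverse).length := dist_le _
        _ = lvl u + lvl v := by
            simp [SimpleGraph.Walk.length_append, SimpleGraph.Walk.length_reverse, length_wc]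
        _ = D u v := hlen.symm
  · obtain ⟨p, hp⟩ := connected.exists_walk_length_eq_dist u v
    rw [← hp]
    exact D_le_length p

/-- walks stay in sets closed under adjacency -/
lemma closed_walk {G' : SimpleGraph (Vtx a J)} {S : Set (Vtx a J)}
    (hS : ∀ u v, u ∈ S → G'.Adj u v → v ∈ S) {u v : Vtx a J}
    (p : G'.Walk u v) (hu : u ∈ S) : v ∈ S := by
  induction p with
  | nil => exact hu
  | cons h q ih => exact ih (hS _ _ hu h)

lemma isAcyclic : (G a J).IsAcyclic := by
  rw [isAcyclic_iff_forall_adj_isBridge]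
  intro v w hadj
  rw [isBridge_iff]
  intro hreach
  set G' := (G a J) \ fromEdgeSet {s(v, w)} with hG'
  have hadj' : ∀ u₁ u₂ : Vtx a J, G'.Adj u₁ u₂ →
      (G a J).Adj u₁ u₂ ∧ s(u₁, u₂) ≠ s(v, w) := by
    rintro u₁ u₂ ⟨h1, h2⟩
    simp only [fromEdgeSet_adj, Set.mem_singleton_iff] at h2
    exact ⟨h1, fun he => h2 ⟨he, h1.ne⟩⟩
  have key : ∀ S : Set (Vtx a J), (∀ u₁ u₂, u₁ ∈ S → G'.Adj u₁ u₂ → u₂ ∈ S) →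
      w ∈ S → v ∈ S := by
    intro S hcl hw
    obtain ⟨p⟩ := hreach
    exact closed_walk hcl p.reverse hw
  have key2 : ∀ S : Set (Vtx a J), (∀ u₁ u₂, u₁ ∈ S → G'.Adj u₁ u₂ → u₂ ∈ S) →
      v ∈ S → w ∈ S := by
    intro S hcl hv
    obtain ⟨p⟩ := hreach
    exact closed_walk hcl p hv
  cases v with
  | c =>
    rcases adj_c_iff.mp hadj with ⟨s, rfl⟩ | ⟨j, rfl⟩
    · -- edge c - x s ; S = {x s}
      have : Vtx.c ∈ ({Vtx.x s} : Set (Vtx a J)) := by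
        refine key _ ?_ rfl
        rintro u₁ u₂ rfl hadj2
        obtain ⟨h1, h2⟩ := hadj' _ _ hadj2
        rw [adj_x_iff] at h1
        subst h1
        exact absurd (Sym2.eq_swap) h2
      simp at this
    · -- edge c - m j ; S = {m j, l j}
      have : Vtx.c ∈ ({Vtx.m j, Vtx.l j} : Set (Vtx a J)) := by
        refine key _ ?_ (by simp)
        rintro u₁ u₂ (rfl | rfl) hadj2
        · obtain ⟨h1, h2⟩ := hadj' _ _ hadj2
          rcases adj_m_iff.mp h1 with rfl | rfl
          · exact absurd (Sym2.eq_swap) h2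
          · simp
        · obtain ⟨h1, h2⟩ := hadj' _ _ hadj2
          rw [adj_l_iff] at h1
          subst h1
          simp
      simp at this
  | x s =>
    have : w = .c := adj_x_iff.mp hadj
    subst this
    have : Vtx.c ∈ ({Vtx.x s} : Set (Vtx a J)) := by
      refine key2 _ ?_ rfl
      rintro u₁ u₂ rfl hadj2
      obtain ⟨h1, h2⟩ := hadj' _ _ hadj2
      rw [adj_x_iff] at h1
      subst h1
      exact absurd rfl h2
    simp at this
  | m j =>
    rcases adj_m_iff.mp hadj with rfl | rfl
    · have : Vtx.c ∈ ({Vtx.m j, Vtx.l j} : Set (Vtx a J)) := by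
        refine key2 _ ?_ (by simp)
        rintro u₁ u₂ (rfl | rfl) hadj2
        · obtain ⟨h1, h2⟩ := hadj' _ _ hadj2
          rcases adj_m_iff.mp h1 with rfl | rfl
          · exact absurd rfl h2
          · simp
        · obtain ⟨h1, h2⟩ := hadj' _ _ hadj2
          rw [adj_l_iff] at h1
          subst h1
          simp
      simp at this
    · have : Vtx.m j ∈ ({Vtx.l j} : Set (Vtx a J)) := by
        refine key _ ?_ rfl
        rintro u₁ u₂ rfl hadj2
        obtain ⟨h1, h2⟩ := hadj' _ _ hadj2
        rw [adj_l_iff] at h1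
        subst h1
        exact absurd (Sym2.eq_swap) h2
      simp at this
  | l j =>
    have : w = .m j := adj_l_iff.mp hadj
    subst this
    have : Vtx.m j ∈ ({Vtx.l j} : Set (Vtx a J)) := by
      refine key2 _ ?_ rfl
      rintro u₁ u₂ rfl hadj2
      obtain ⟨h1, h2⟩ := hadj' _ _ hadj2
      rw [adj_l_iff] at h1
      subst h1
      exact absurd rfl h2
    simp at this

lemma isTree : (G a J).IsTree := ⟨connected, isAcyclic⟩

section SetDistLemmas

lemma setDist_eq_sInf_D (u : Vtx a J) (S : Set (Vtx a J)) :
    setDist (G a J) u S = sInf (D u '' S) := by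
  unfold setDist
  congr 1
  exact Set.image_congr fun w _ => dist_eq u w

lemma setDist_le {u w : Vtx a J} {S : Set (Vtx a J)} (hw : w ∈ S) :
    setDist (G a J) u S ≤ D u w := by
  rw [setDist_eq_sInf_D]
  exact Nat.sInf_le ⟨w, hw, rfl⟩

lemma le_setDist {u : Vtx a J} {S : Set (Vtx a J)} {k : ℕ}
    (hS : S.Nonempty) (h : ∀ w ∈ S, k ≤ D u w) : k ≤ setDist (G a J) u S := by
  rw [setDist_eq_sInf_D]
  refine le_csInf (hS.image _) ?_
  rintro _ ⟨w, hw, rfl⟩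
  exact h w hw

lemma setDist_eq {u : Vtx a J} {S : Set (Vtx a J)} {k : ℕ}
    (h1 : ∃ w ∈ S, D u w = k) (h2 : ∀ w ∈ S, k ≤ D u w) :
    setDist (G a J) u S = k := by
  obtain ⟨w, hw, hDw⟩ := h1
  exact le_antisymm (hDw ▸ setDist_le hw) (le_setDist ⟨w, hw⟩ h2)

lemma setDist_zero_of_mem {u : Vtx a J} {S : Set (Vtx a J)} (h : u ∈ S) :
    setDist (G a J) u S = 0 :=
  setDist_eq ⟨u, h, D_self u⟩ (fun _ _ => Nat.zero_le _)

lemma mem_of_setDist_zero {u : Vtx a J} {S : Set (Vtx a J)} (hS : S.Nonempty)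
    (h : setDist (G a J) u S = 0) : u ∈ S := by
  rw [setDist_eq_sInf_D] at h
  have h0 : 0 ∈ D u '' S := h ▸ Nat.sInf_mem (hS.image _)
  obtain ⟨w, hw, hDw⟩ := h0
  rcases eq_or_ne u w with rfl | hne
  · exact hw
  · have := D_pos hne; omega

end SetDistLemmas

section Twin

lemma nb_c : (G a J).neighborSet .c = {v | (∃ s, v = .x s) ∨ (∃ j, v = .m j)} :=
  Set.ext fun _ => adj_c_iff

lemma nb_x (s : Fin a) : (G a J).neighborSet (.x s) = {Vtx.c} :=
  Set.ext fun _ => by simp [neighborSet, adj_x_iff]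

lemma nb_m (j : J) : (G a J).neighborSet (.m j) = {Vtx.c, Vtx.l j} :=
  Set.ext fun _ => by simp [neighborSet, adj_m_iff]

lemma nb_l (j : J) : (G a J).neighborSet (.l j) = {Vtx.m j} :=
  Set.ext fun _ => by simp [neighborSet, adj_l_iff]

/-- a second leaf or a leg mid, distinct from `x s`, adjacent to `c`. -/
lemma other_nb (hA : 2 ≤ a ∨ Nonempty J) (s : Fin a) :
    ∃ v, v ∈ (G a J).neighborSet .c ∧ v ≠ .x s ∧ v ≠ .c := by
  rcases hA with h2 | hJ
  · by_cases hs : s.val = 0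
    · exact ⟨.x ⟨1, h2⟩, by simp [nb_c], by simp [Fin.ext_iff, hs], by simp⟩
    · exact ⟨.x ⟨0, by omega⟩, by simp [nb_c], by simp [Fin.ext_iff]; omega, by simp⟩
  · obtain ⟨j⟩ := hJ
    exact ⟨.m j, by simp [nb_c], by simp, by simp⟩

lemma tc_x (hA : 2 ≤ a ∨ Nonempty J) (s : Fin a) :
    twinClass (G a J) (.x s) = {v | ∃ t, v = .x t} := by
  ext v
  constructor
  · intro h
    have h' := Set.ext_iff.mp h
    cases v with
    | c =>
      exfalso
      obtain ⟨v', hv1, hv2, hv3⟩ := other_nb (a := a) (J := J) hA s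
      have := (h' v').mpr ⟨hv1, by simpa using hv2⟩
      simp only [nb_x, Set.mem_diff, Set.mem_singleton_iff] at this
      exact this.2 this.1
    | x t => exact ⟨t, rfl⟩
    | m j =>
      exfalso
      have := (h' (.l j)).mpr ⟨by simp [nb_m], by simp⟩
      simp [nb_x] at this
    | l j =>
      exfalso
      have := (h' (.m j)).mpr ⟨by simp [nb_l], by simp⟩
      simp [nb_x] at this
  · rintro ⟨t, rfl⟩
    show _ = _
    rw [nb_x, nb_x]
    ext w
    simp only [Set.mem_diff, Set.mem_singleton_iff]
    constructor
    · rintro ⟨rfl, _⟩; exact ⟨rfl, by simp⟩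
    · rintro ⟨rfl, _⟩; exact ⟨rfl, by simp⟩

lemma tc_c (ha : 1 ≤ a) (hA : 2 ≤ a ∨ Nonempty J) :
    twinClass (G a J) (.c : Vtx a J) = {.c} := by
  ext v
  constructor
  · intro h
    have h' := Set.ext_iff.mp h
    cases v with
    | c => rfl
    | x s =>
      exfalso
      obtain ⟨v', hv1, hv2, hv3⟩ := other_nb (a := a) (J := J) hA s
      have := (h' v').mp ⟨hv1, by simpa using hv2⟩
      simp only [nb_x, Set.mem_diff, Set.mem_singleton_iff] at this
      exact this.2 this.1
    | m j =>
      exfalso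
      have := (h' (.x ⟨0, ha⟩)).mp ⟨by simp [nb_c], by simp⟩
      simp [nb_m] at this
    | l j =>
      exfalso
      have := (h' (.x ⟨0, ha⟩)).mp ⟨by simp [nb_c], by simp⟩
      simp [nb_l] at this
  · rintro rfl
    show _ = _
    rfl

lemma tc_m (ha : 1 ≤ a) (j : J) : twinClass (G a J) (.m j) = {.m j} := by
  ext v
  constructor
  · intro h
    have h' := Set.ext_iff.mp h
    cases v with
    | c =>
      exfalso
      have := (h' (.x ⟨0, ha⟩)).mpr ⟨by simp [nb_c], by simp⟩
      simp [nb_m] at this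
    | x s =>
      exfalso
      have := (h' (.l j)).mp ⟨by simp [nb_m], by simp⟩
      simp [nb_x] at this
    | m k =>
      rcases eq_or_ne k j with rfl | hk
      · rfl
      · exfalso
        have := (h' (.l j)).mp ⟨by simp [nb_m], by simp⟩
        simp only [nb_m, Set.mem_diff, Set.mem_insert_iff,
          Set.mem_singleton_iff] at this
        obtain ⟨h1 | h1, -⟩ := this
        · exact absurd h1 (by simp)
        · exact hk (by injection h1 with h2; exact h2.symm)
    | l k =>
      exfalso
      rcases eq_or_ne k j with rfl | hk
      · have := (h' .c).mp ⟨by simp [nb_m], by simp⟩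
        simp [nb_l] at this
      · have := (h' .c).mp ⟨by simp [nb_m], by simp⟩
        simp [nb_l] at this
  · rintro rfl
    show _ = _
    rfl

lemma tc_l (ha : 1 ≤ a) (j : J) : twinClass (G a J) (.l j) = {.l j} := by
  ext v
  constructor
  · intro h
    have h' := Set.ext_iff.mp h
    cases v with
    | c =>
      exfalso
      have := (h' (.x ⟨0, ha⟩)).mpr ⟨by simp [nb_c], by simp⟩
      simp [nb_l] at this
    | x s =>
      exfalso
      have := (h' (.m j)).mp ⟨by simp [nb_l], by simp⟩
      simp [nb_x] at this
    | m k =>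
      exfalso
      rcases eq_or_ne k j with rfl | hk
      · have := (h' .c).mpr ⟨by simp [nb_m], by simp⟩
        simp [nb_l] at this
      · have := (h' (.m j)).mp ⟨by simp [nb_l], by simp; exact fun hh => hk hh.symm⟩
        simp only [nb_m, Set.mem_diff, Set.mem_insert_iff,
          Set.mem_singleton_iff] at this
        obtain ⟨h1 | h1, -⟩ := this
        · exact absurd h1 (by simp)
        · exact absurd h1 (by simp)
    | l k =>
      rcases eq_or_ne k j with rfl | hk
      · rfl
      · exfalso
        have := (h' (.m j)).mp ⟨by simp [nb_l], by simp⟩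
        simp only [nb_l, Set.mem_diff, Set.mem_singleton_iff] at this
        obtain ⟨h1, -⟩ := this
        injection h1 with h2
        exact hk h2.symm
  · rintro rfl
    show _ = _
    rfl

lemma ncard_xs : ({v | ∃ t, v = .x t} : Set (Vtx a J)).ncard = a := by
  have hrange : ({v | ∃ t, v = .x t} : Set (Vtx a J)) = Set.range Vtx.x := by
    ext v; simp [Set.mem_range, eq_comm]
  rw [hrange, ← Set.image_univ,
    Set.ncard_image_of_injective _ (fun s t h => by injection h),
    Set.ncard_univ, Nat.card_eq_fintype_card, Fintype.card_fin]

lemma twinNumber_eq (ha : 1 ≤ a) (hA : 2 ≤ a ∨ Nonempty J) :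
    twinNumber (G a J) = a := by
  have hxmem : a ∈ {k | ∃ u : Vtx a J, (twinClass (G a J) u).ncard = k} :=
    ⟨.x ⟨0, ha⟩, by rw [tc_x hA]; exact ncard_xs⟩
  have hub : ∀ k ∈ {k | ∃ u : Vtx a J, (twinClass (G a J) u).ncard = k}, k ≤ a := by
    rintro k ⟨u, rfl⟩
    cases u with
    | c => rw [tc_c ha hA]; simpa using ha
    | x s => rw [tc_x hA, ncard_xs]
    | m j => rw [tc_m ha]; simpa using ha
    | l j => rw [tc_l ha]; simpa using ha
  exact le_antisymm (csSup_le ⟨a, hxmem⟩ hub) (le_csSup ⟨a, hub⟩ hxmem)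

end Twin

/-! ### The legs index type for the main construction -/

def Legs (a b : ℕ) : Type :=
  Σ q : Fin b, {p : Fin b // q.val ≠ 0 ∧ p ≠ q ∧ (p.val = 0 → a ≤ q.val)}

instance (a b : ℕ) : DecidableEq (Legs a b) := by unfold Legs; infer_instance
instance (a b : ℕ) : Fintype (Legs a b) := by unfold Legs; infer_instance

def pp {a b : ℕ} (j : Legs a b) : ℕ := j.2.1.val
def qq {a b : ℕ} (j : Legs a b) : ℕ := j.1.val

lemma qq_ne {a b : ℕ} (j : Legs a b) : qq j ≠ 0 := j.2.2.1
lemma pq_ne {a b : ℕ} (j : Legs a b) : pp j ≠ qq j :=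
  fun h => j.2.2.2.1 (Fin.ext h)
lemma p0_le {a b : ℕ} (j : Legs a b) : pp j = 0 → a ≤ qq j := j.2.2.2.2
lemma pp_lt {a b : ℕ} (j : Legs a b) : pp j < b := j.2.1.isLt
lemma qq_lt {a b : ℕ} (j : Legs a b) : qq j < b := j.1.isLt

lemma legs_ext {a b : ℕ} {j k : Legs a b} (h1 : pp j = pp k) (h2 : qq j = qq k) :
    j = k := by
  obtain ⟨q, p, hp⟩ := j
  obtain ⟨q', p', hp'⟩ := k
  simp only [pp, qq] at h1 h2
  have hq : q = q' := Fin.ext h2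
  subst hq
  exact congrArg _ (Subtype.ext (Fin.ext h1))

section Main

variable {a b : ℕ}

/-- part assignment -/
def pi : Vtx a (Legs a b) → ℕ
  | .c => 0
  | .x s => s.val
  | .m j => pp j
  | .l j => qq j

def part (a b : ℕ) (r : ℕ) : Set (Vtx a (Legs a b)) := {v | pi v = r}

lemma mem_part {v : Vtx a (Legs a b)} {r : ℕ} : v ∈ part a b r ↔ pi v = r := Iff.rfl

lemma pi_lt (hb2 : 2 ≤ b) (hab : a ≤ b) (v : Vtx a (Legs a b)) : pi v < b := by
  cases v with
  | c => exact show (0:ℕ) < b by omega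
  | x s => exact lt_of_lt_of_le s.isLt hab
  | m j => exact pp_lt j
  | l j => exact qq_lt j

variable (ha : 1 ≤ a) (hab : a ≤ b) (hb2 : 2 ≤ b) (hP : ¬(a = 1 ∧ b = 2))

include hab hP in
lemma legs_b3 (j : Legs a b) (ha : 1 ≤ a) : 3 ≤ b := by
  by_contra hb3
  have hq := qq_ne j
  have hqlt := qq_lt j
  have hplt := pp_lt j
  have hpq := pq_ne j
  have hb : b = 2 := by omega
  have h1 : qq j = 1 := by omega
  have h0 : pp j = 0 := by omega
  have := p0_le j h0
  exact hP (by omega)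

include ha hab hb2 hP in
lemma wit1 {r : ℕ} (hr0 : r ≠ 0) (hrb : r < b) :
    ∃ w ∈ part a b r, ((∃ t : Fin a, w = .x t) ∨ (∃ k : Legs a b, w = .m k ∧ pp k = r)) := by
  by_cases hra : r < a
  · exact ⟨.x ⟨r, hra⟩, rfl, Or.inl ⟨⟨r, hra⟩, rfl⟩⟩
  · have hb3 : 3 ≤ b := by omega
    rcases eq_or_ne r 1 with rfl | hr1
    · exact ⟨.m ⟨⟨2, by omega⟩, ⟨⟨1, hrb⟩, show (2:ℕ) ≠ 0 by omega,
        by simp [Fin.ext_iff], fun h0 => absurd h0 (show (1:ℕ) ≠ 0 by omega)⟩⟩,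
        rfl, Or.inr ⟨_, rfl, rfl⟩⟩
    · exact ⟨.m ⟨⟨1, by omega⟩, ⟨⟨r, hrb⟩, show (1:ℕ) ≠ 0 by omega,
        by simp [Fin.ext_iff]; omega, fun h0 => absurd h0 hr0⟩⟩,
        rfl, Or.inr ⟨_, rfl, rfl⟩⟩

include ha hab hb2 hP in
lemma part_nonempty {r : ℕ} (hrb : r < b) : (part a b r).Nonempty := by
  rcases eq_or_ne r 0 with rfl | hr0
  · exact ⟨.c, rfl⟩
  · obtain ⟨w, hw, -⟩ := wit1 ha hab hb2 hP hr0 hrb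
    exact ⟨w, hw⟩

include ha hab hb2 hP in
lemma sd_pos {u : Vtx a (Legs a b)} {r : ℕ} (hrb : r < b) (hu : pi u ≠ r) :
    1 ≤ setDist (G a (Legs a b)) u (part a b r) :=
  le_setDist (part_nonempty ha hab hb2 hP hrb)
    (fun w hw => D_pos (fun he => hu (by rw [he]; exact hw)))

include ha hab hb2 hP in
lemma sd_c {r : ℕ} (hr0 : r ≠ 0) (hrb : r < b) :
    setDist (G a (Legs a b)) .c (part a b r) = 1 := by
  obtain ⟨w, hw, hcase⟩ := wit1 ha hab hb2 hP hr0 hrb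
  refine le_antisymm ?_ (sd_pos ha hab hb2 hP hrb hr0.symm)
  calc setDist (G a (Legs a b)) .c (part a b r) ≤ D .c w := setDist_le hw
  _ = 1 := by rcases hcase with ⟨t, rfl⟩ | ⟨k, rfl, -⟩ <;> simp [D]

include ha hab hb2 hP in
lemma sd_x0 {s : Fin a} (hs : s.val ≠ 0) :
    setDist (G a (Legs a b)) (.x s) (part a b 0) = 1 := by
  refine le_antisymm ?_ (sd_pos ha hab hb2 hP (show (0:ℕ) < b by omega) hs)
  calc setDist (G a (Legs a b)) (.x s) (part a b 0) ≤ D (.x s) .c :=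
        setDist_le rfl
  _ = 1 := by simp [D]

include ha hab hb2 hP in
lemma sd_x2 {s : Fin a} {r : ℕ} (hr0 : r ≠ 0) (hrs : r ≠ s.val) (hrb : r < b) :
    setDist (G a (Legs a b)) (.x s) (part a b r) = 2 := by
  refine setDist_eq ?_ ?_
  · obtain ⟨w, hw, hcase⟩ := wit1 ha hab hb2 hP hr0 hrb
    refine ⟨w, hw, ?_⟩
    rcases hcase with ⟨t, rfl⟩ | ⟨k, rfl, -⟩
    · have htv : t.val = r := hw
      have hts : s ≠ t := fun he => by subst he; omega
      simp [D, hts]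
    · simp [D]
  · intro w hw
    rw [mem_part] at hw
    cases w with
    | c => exact absurd (hw : (0:ℕ) = r).symm hr0
    | x t =>
      have htv : t.val = r := hw
      have hts : s ≠ t := fun he => by subst he; omega
      simp [D, hts]
    | m k => simp [D]
    | l k => simp [D]

include ha hab hb2 hP in
lemma sd_m0 {j : Legs a b} (hp : pp j ≠ 0) :
    setDist (G a (Legs a b)) (.m j) (part a b 0) = 1 := by
  refine le_antisymm ?_ (sd_pos ha hab hb2 hP (show (0:ℕ) < b by omega) hp)
  calc setDist (G a (Legs a b)) (.m j) (part a b 0) ≤ D (.m j) .c :=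
        setDist_le rfl
  _ = 1 := by simp [D]

include ha hab hb2 hP in
lemma sd_mq {j : Legs a b} :
    setDist (G a (Legs a b)) (.m j) (part a b (qq j)) = 1 := by
  refine le_antisymm ?_ (sd_pos ha hab hb2 hP (qq_lt j) (pq_ne j))
  calc setDist (G a (Legs a b)) (.m j) (part a b (qq j)) ≤ D (.m j) (.l j) :=
        setDist_le rfl
  _ = 1 := by simp [D]

include ha hab hb2 hP in
lemma sd_m2 {j : Legs a b} {r : ℕ} (hr0 : r ≠ 0) (hrp : r ≠ pp j) (hrq : r ≠ qq j)
    (hrb : r < b) :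
    setDist (G a (Legs a b)) (.m j) (part a b r) = 2 := by
  refine setDist_eq ?_ ?_
  · obtain ⟨w, hw, hcase⟩ := wit1 ha hab hb2 hP hr0 hrb
    refine ⟨w, hw, ?_⟩
    rcases hcase with ⟨t, rfl⟩ | ⟨k, rfl, hk⟩
    · simp [D]
    · have hkj : j ≠ k := fun he => hrp (by rw [he]; omega)
      simp [D, hkj]
  · intro w hw
    rw [mem_part] at hw
    cases w with
    | c => exact absurd (hw : (0:ℕ) = r).symm hr0
    | x t => simp [D]
    | m k =>
      have hkv : pp k = r := hw
      have hkj : j ≠ k := fun he => hrp (by rw [he, hkv])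
      simp [D, hkj]
    | l k =>
      have hkv : qq k = r := hw
      have hkj : j ≠ k := fun he => hrq (by rw [he, hkv])
      simp [D, hkj]

include ha hab hb2 hP in
lemma sd_lp {j : Legs a b} :
    setDist (G a (Legs a b)) (.l j) (part a b (pp j)) = 1 := by
  refine le_antisymm ?_
    (sd_pos ha hab hb2 hP (pp_lt j) (Ne.symm (pq_ne j)))
  calc setDist (G a (Legs a b)) (.l j) (part a b (pp j)) ≤ D (.l j) (.m j) :=
        setDist_le rfl
  _ = 1 := by simp [D]

include ha hab hb2 hP in
lemma sd_l0 {j : Legs a b} (hp : pp j ≠ 0) :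
    setDist (G a (Legs a b)) (.l j) (part a b 0) = 2 := by
  refine setDist_eq ⟨.c, rfl, by simp [D]⟩ ?_
  intro w hw
  rw [mem_part] at hw
  cases w with
  | c => simp [D]
  | x t => simp [D]
  | m k =>
    have hkj : j ≠ k := fun he => hp (by rw [he]; exact hw)
    simp [D, hkj]
  | l k => exact absurd hw (qq_ne k)

include ha hab hb2 hP in
lemma sd_l3 {j : Legs a b} {r : ℕ} (hr0 : r ≠ 0) (hrp : r ≠ pp j) (hrq : r ≠ qq j)
    (hrb : r < b) :
    setDist (G a (Legs a b)) (.l j) (part a b r) = 3 := by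
  refine setDist_eq ?_ ?_
  · obtain ⟨w, hw, hcase⟩ := wit1 ha hab hb2 hP hr0 hrb
    refine ⟨w, hw, ?_⟩
    rcases hcase with ⟨t, rfl⟩ | ⟨k, rfl, hk⟩
    · simp [D]
    · have hkj : j ≠ k := fun he => hrp (by rw [he]; omega)
      simp [D, hkj]
  · intro w hw
    rw [mem_part] at hw
    cases w with
    | c => exact absurd (hw : (0:ℕ) = r).symm hr0
    | x t => simp [D]
    | m k =>
      have hkv : pp k = r := hw
      have hkj : j ≠ k := fun he => hrp (by rw [he, hkv])
      simp [D, hkj]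
    | l k =>
      have hkv : qq k = r := hw
      have hkj : j ≠ k := fun he => hrq (by rw [he, hkv])
      simp [D, hkj]

end Main

section Partition

variable {a b : ℕ} (ha : 1 ≤ a) (hab : a ≤ b) (hb2 : 2 ≤ b) (hP : ¬(a = 1 ∧ b = 2))

def Pn (a b : ℕ) : Set (Set (Vtx a (Legs a b))) := part a b '' {r | r < b}

include ha hab hb2 hP in
lemma Pn_partition : Setoid.IsPartition (Pn a b) := by
  constructor
  · rintro ⟨r, hr, heq⟩
    obtain ⟨w, hw⟩ := part_nonempty ha hab hb2 hP (hr : r < b)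
    rw [heq] at hw
    exact hw
  · intro v
    refine ⟨part a b (pi v), ⟨⟨pi v, pi_lt hb2 hab v, rfl⟩, rfl⟩, ?_⟩
    rintro S ⟨⟨r, hr, rfl⟩, hv⟩
    rw [← (hv : pi v = r)]

include ha hab hb2 hP in
lemma Pn_locating :
    ∀ u v : Vtx a (Legs a b),
      (∀ S ∈ Pn a b, setDist (G a (Legs a b)) u S = setDist (G a (Legs a b)) v S) →
      u = v := by
  intro u v h
  have h' : ∀ r, r < b →
      setDist (G a (Legs a b)) u (part a b r) = setDist (G a (Legs a b)) v (part a b r) :=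
    fun r hr => h (part a b r) ⟨r, hr, rfl⟩
  have hpi : pi u = pi v := by
    have h0 := h' (pi u) (pi_lt hb2 hab u)
    have hu0 : setDist (G a (Legs a b)) u (part a b (pi u)) = 0 :=
      setDist_zero_of_mem rfl
    have hv0 : setDist (G a (Legs a b)) v (part a b (pi u)) = 0 := by omega
    exact (mem_of_setDist_zero (part_nonempty ha hab hb2 hP (pi_lt hb2 hab u)) hv0).symm
  cases u with
  | c =>
    cases v with
    | c => rfl
    | x s =>
      exfalso
      have hs0 : s.val = 0 := (hpi : (0:ℕ) = s.val).symm
      have h1 := h' 1 (by omega)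
      rw [sd_c ha hab hb2 hP (by omega) (by omega),
        sd_x2 ha hab hb2 hP (by omega) (by omega) (by omega)] at h1
      exact absurd h1 (by omega)
    | m j =>
      exfalso
      have hpj : pp j = 0 := (hpi : (0:ℕ) = pp j).symm
      have hb3 : 3 ≤ b := legs_b3 hab hP j ha
      set r := if qq j = 1 then 2 else 1 with hr
      have hr0 : r ≠ 0 := by simp only [hr]; split_ifs <;> omega
      have hrb : r < b := by simp only [hr]; split_ifs <;> omega
      have hrq : r ≠ qq j := by
        have := qq_ne j
        simp only [hr]; split_ifs with hq1 <;> omega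
      have h1 := h' r hrb
      rw [sd_c ha hab hb2 hP hr0 hrb,
        sd_m2 ha hab hb2 hP hr0 (by omega) hrq hrb] at h1
      exact absurd h1 (by omega)
    | l j => exact absurd (hpi : (0:ℕ) = qq j).symm (qq_ne j)
  | x s =>
    cases v with
    | c =>
      exfalso
      have hs0 : s.val = 0 := (hpi : s.val = (0:ℕ))
      have h1 := h' 1 (by omega)
      rw [sd_c ha hab hb2 hP (by omega) (by omega),
        sd_x2 ha hab hb2 hP (by omega) (by omega) (by omega)] at h1
      exact absurd h1 (by omega)
    | x t => exact congrArg _ (Fin.ext (hpi : s.val = t.val))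
    | m j =>
      exfalso
      have hsp : s.val = pp j := hpi
      have h1 := h' (qq j) (qq_lt j)
      rw [sd_x2 ha hab hb2 hP (qq_ne j) (by have := pq_ne j; omega) (qq_lt j),
        sd_mq ha hab hb2 hP] at h1
      exact absurd h1 (by omega)
    | l j =>
      exfalso
      have hsq : s.val = qq j := hpi
      by_cases hpj : pp j = 0
      · have hb3 : 3 ≤ b := legs_b3 hab hP j ha
        set r := if qq j = 1 then 2 else 1 with hr
        have hr0 : r ≠ 0 := by simp only [hr]; split_ifs <;> omega
        have hrb : r < b := by simp only [hr]; split_ifs <;> omega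
        have hrq : r ≠ qq j := by
          have := qq_ne j
          simp only [hr]; split_ifs with hq1 <;> omega
        have h1 := h' r hrb
        rw [sd_x2 ha hab hb2 hP hr0 (by omega) hrb,
          sd_l3 ha hab hb2 hP hr0 (by omega) hrq hrb] at h1
        exact absurd h1 (by omega)
      · have h1 := h' 0 (by omega)
        rw [sd_x0 ha hab hb2 hP (by have := qq_ne j; omega),
          sd_l0 ha hab hb2 hP hpj] at h1
        exact absurd h1 (by omega)
  | m j =>
    cases v with
    | c =>
      exfalso
      have hpj : pp j = 0 := hpi
      have hb3 : 3 ≤ b := legs_b3 hab hP j ha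
      set r := if qq j = 1 then 2 else 1 with hr
      have hr0 : r ≠ 0 := by simp only [hr]; split_ifs <;> omega
      have hrb : r < b := by simp only [hr]; split_ifs <;> omega
      have hrq : r ≠ qq j := by
        have := qq_ne j
        simp only [hr]; split_ifs with hq1 <;> omega
      have h1 := h' r hrb
      rw [sd_c ha hab hb2 hP hr0 hrb,
        sd_m2 ha hab hb2 hP hr0 (by omega) hrq hrb] at h1
      exact absurd h1 (by omega)
    | x t =>
      exfalso
      have hsp : pp j = t.val := hpi
      have h1 := h' (qq j) (qq_lt j)
      rw [sd_x2 ha hab hb2 hP (qq_ne j) (by have := pq_ne j; omega) (qq_lt j),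
        sd_mq ha hab hb2 hP] at h1
      exact absurd h1 (by omega)
    | m k =>
      have hppk : pp j = pp k := hpi
      by_cases hqq : qq j = qq k
      · rw [legs_ext hppk hqq]
      · exfalso
        have h1 := h' (qq j) (qq_lt j)
        rw [sd_mq ha hab hb2 hP,
          sd_m2 ha hab hb2 hP (qq_ne j) (by have := pq_ne j; omega) (by omega)
            (qq_lt j)] at h1
        exact absurd h1 (by omega)
    | l k =>
      exfalso
      have hpq : pp j = qq k := hpi
      by_cases hpk : pp k = 0
      · have h1 := h' (qq j) (qq_lt j)
        rw [sd_mq ha hab hb2 hP,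
          sd_l3 ha hab hb2 hP (qq_ne j) (by have := qq_ne j; omega)
            (by have := pq_ne j; omega) (qq_lt j)] at h1
        exact absurd h1 (by omega)
      · have h1 := h' 0 (by omega)
        rw [sd_m0 ha hab hb2 hP (by have := qq_ne k; omega),
          sd_l0 ha hab hb2 hP hpk] at h1
        exact absurd h1 (by omega)
  | l j =>
    cases v with
    | c => exact absurd (hpi : qq j = (0:ℕ)) (qq_ne j)
    | x t =>
      exfalso
      have hsq : qq j = t.val := hpi
      by_cases hpj : pp j = 0
      · have hb3 : 3 ≤ b := legs_b3 hab hP j ha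
        set r := if qq j = 1 then 2 else 1 with hr
        have hr0 : r ≠ 0 := by simp only [hr]; split_ifs <;> omega
        have hrb : r < b := by simp only [hr]; split_ifs <;> omega
        have hrq : r ≠ qq j := by
          have := qq_ne j
          simp only [hr]; split_ifs with hq1 <;> omega
        have h1 := h' r hrb
        rw [sd_x2 ha hab hb2 hP hr0 (by omega) hrb,
          sd_l3 ha hab hb2 hP hr0 (by omega) hrq hrb] at h1
        exact absurd h1 (by omega)
      · have h1 := h' 0 (by omega)
        rw [sd_x0 ha hab hb2 hP (by have := qq_ne j; omega),
          sd_l0 ha hab hb2 hP hpj] at h1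
        exact absurd h1 (by omega)
    | m k =>
      exfalso
      have hpq : qq j = pp k := hpi
      by_cases hpj : pp j = 0
      · have h1 := h' (qq k) (qq_lt k)
        rw [sd_mq ha hab hb2 hP,
          sd_l3 ha hab hb2 hP (qq_ne k) (by have := qq_ne k; omega)
            (by have := pq_ne k; omega) (qq_lt k)] at h1
        exact absurd h1 (by omega)
      · have h1 := h' 0 (by omega)
        rw [sd_m0 ha hab hb2 hP (by have := qq_ne j; omega),
          sd_l0 ha hab hb2 hP hpj] at h1
        exact absurd h1 (by omega)
    | l k =>
      have hqq : qq j = qq k := hpi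
      by_cases hpp : pp j = pp k
      · rw [legs_ext hpp hqq]
      · exfalso
        by_cases hpj : pp j = 0
        · have h1 := h' (pp k) (pp_lt k)
          rw [sd_lp ha hab hb2 hP,
            sd_l3 ha hab hb2 hP (by omega) (by omega)
              (by have := pq_ne k; omega) (pp_lt k)] at h1
          exact absurd h1 (by omega)
        · have h1 := h' (pp j) (pp_lt j)
          rw [sd_lp ha hab hb2 hP,
            sd_l3 ha hab hb2 hP hpj (by omega)
              (by have := pq_ne j; omega) (pp_lt j)] at h1
          exact absurd h1 (by omega)

include ha hab hb2 hP in
lemma Pn_ncard : (Pn a b).ncard = b := by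
  have hinj : Set.InjOn (part a b) {r | r < b} := by
    intro r hr r' hr' heq
    obtain ⟨w, hw⟩ := part_nonempty ha hab hb2 hP (hr : r < b)
    have hw' : w ∈ part a b r' := heq ▸ hw
    exact (hw : pi w = r).symm.trans (hw' : pi w = r')
  rw [Pn, Set.ncard_image_of_injOn hinj,
    show {r : ℕ | r < b} = ↑(Finset.range b) by ext; simp,
    Set.ncard_coe_finset, Finset.card_range]

end Partition

section Lower

variable {a b : ℕ}

lemma card_fiber_q (ha : 1 ≤ a) (hb2 : 2 ≤ b) (q : Fin b) :
    Fintype.card {p : Fin b // q.val ≠ 0 ∧ p ≠ q ∧ (p.val = 0 → a ≤ q.val)} =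
      if q.val = 0 then 0 else if a ≤ q.val then b - 1 else b - 2 := by
  rcases eq_or_ne q.val 0 with hq | hq
  · rw [if_pos hq]
    exact Fintype.card_eq_zero_iff.mpr ⟨fun p => p.2.1 hq⟩
  · rw [if_neg hq]
    rcases le_or_gt a q.val with hle | hlt
    · rw [if_pos hle]
      have he : ∀ p : Fin b, (q.val ≠ 0 ∧ p ≠ q ∧ (p.val = 0 → a ≤ q.val)) ↔ ¬(p = q) :=
        fun p => ⟨fun h => h.2.1, fun h => ⟨hq, h, fun _ => hle⟩⟩
      rw [Fintype.card_congr (Equiv.subtypeEquivRight he), Fintype.card_subtype_compl,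
        Fintype.card_subtype_eq, Fintype.card_fin]
    · rw [if_neg (by omega)]
      have hz : q ≠ (⟨0, by omega⟩ : Fin b) := by
        intro he; exact hq (by rw [he])
      have he : ∀ p : Fin b,
          (q.val ≠ 0 ∧ p ≠ q ∧ (p.val = 0 → a ≤ q.val)) ↔
            ¬(p = q ∨ p = ⟨0, by omega⟩) := by
        intro p
        constructor
        · rintro ⟨-, h1, h2⟩ (rfl | rfl)
          · exact h1 rfl
          · exact absurd (h2 rfl) (by omega)
        · intro h
          refine ⟨hq, fun he => h (Or.inl he), fun h0 => ?_⟩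
          exact absurd (Fin.ext h0 : p = ⟨0, by omega⟩) (fun he => h (Or.inr he))
      rw [Fintype.card_congr (Equiv.subtypeEquivRight he), Fintype.card_subtype_compl,
        Fintype.card_fin]
      have : Fintype.card {p : Fin b // p = q ∨ p = ⟨0, by omega⟩} =
          ({q, ⟨0, by omega⟩} : Finset (Fin b)).card := by
        rw [Fintype.card_subtype]
        congr 1
        ext p
        simp
      rw [this, Finset.card_insert_of_notMem (by simpa using hz), Finset.card_singleton]

lemma card_Legs (ha : 1 ≤ a) (hab : a ≤ b) (hb2 : 2 ≤ b) :
    Nat.card (Legs a b) + (a - 1) = (b - 1) * (b - 1) := by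
  rw [Nat.card_eq_fintype_card]
  have h1 : Fintype.card (Legs a b) =
      ∑ q : Fin b, Fintype.card {p : Fin b // q.val ≠ 0 ∧ p ≠ q ∧ (p.val = 0 → a ≤ q.val)} :=
    Fintype.card_sigma
  rw [h1]
  have h2 : ∀ q : Fin b,
      Fintype.card {p : Fin b // q.val ≠ 0 ∧ p ≠ q ∧ (p.val = 0 → a ≤ q.val)} =
        (fun i => if i = 0 then 0 else if a ≤ i then b - 1 else b - 2) q.val :=
    fun q => card_fiber_q ha hb2 q
  rw [Finset.sum_congr rfl (fun q _ => h2 q),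
    Fin.sum_univ_eq_sum_range (fun i => if i = 0 then 0 else if a ≤ i then b - 1 else b - 2) b]
  rw [Finset.range_eq_Ico, ← Finset.sum_Ico_consecutive _ (by omega : (0:ℕ) ≤ a) hab,
    ← Finset.sum_Ico_consecutive _ (by omega : (0:ℕ) ≤ 1) (by omega : (1:ℕ) ≤ a)]
  have e0 : ∑ i ∈ Finset.Ico 0 1, (if i = 0 then 0 else if a ≤ i then b - 1 else b - 2) = 0 := by
    simp
  have e1 : ∑ i ∈ Finset.Ico 1 a, (if i = 0 then 0 else if a ≤ i then b - 1 else b - 2) =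
      (a - 1) * (b - 2) := by
    rw [Finset.sum_congr rfl (g := fun _ => b - 2) (fun i hi => by
      rw [Finset.mem_Ico] at hi
      rw [if_neg (by omega), if_neg (by omega)]), Finset.sum_const, Nat.card_Ico,
      smul_eq_mul]
  have e2 : ∑ i ∈ Finset.Ico a b, (if i = 0 then 0 else if a ≤ i then b - 1 else b - 2) =
      (b - a) * (b - 1) := by
    rw [Finset.sum_congr rfl (g := fun _ => b - 1) (fun i hi => by
      rw [Finset.mem_Ico] at hi
      rw [if_neg (by omega), if_pos (by omega)]), Finset.sum_const, Nat.card_Ico,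
      smul_eq_mul]
  rw [e0, e1, e2]
  zify [ha, hab, hb2, show 1 ≤ b by omega]
  ring

variable (ha : 1 ≤ a) (hab : a ≤ b) (hb2 : 2 ≤ b) (hP : ¬(a = 1 ∧ b = 2))

include ha hab hb2 hP in
lemma lower_bound (Q : Set (Set (Vtx a (Legs a b))))
    (hQ : IsLocatingPartition (G a (Legs a b)) Q) : b ≤ Q.ncard := by
  classical
  obtain ⟨⟨hQ0, hQu⟩, hloc⟩ := hQ
  have hfin : Q.Finite := Set.toFinite Q
  -- the part containing a vertex
  let pt : Vtx a (Legs a b) → Set (Vtx a (Legs a b)) := fun v => (hQu v).choose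
  have hptQ : ∀ v, pt v ∈ Q := fun v => ((hQu v).choose_spec).1.1
  have hptm : ∀ v, v ∈ pt v := fun v => ((hQu v).choose_spec).1.2
  have hptu : ∀ v S, S ∈ Q → v ∈ S → S = pt v :=
    fun v S hS hv => ((hQu v).choose_spec).2 S ⟨hS, hv⟩
  -- if two vertices lie in the same part and have equal D to everything outside it,
  -- then all their set-distances agree
  have hsame : ∀ u v : Vtx a (Legs a b), pt u = pt v →
      (∀ w, w ∉ pt u → D u w = D v w) →
      (∀ S ∈ Q, setDist (G a (Legs a b)) u S = setDist (G a (Legs a b)) v S) := by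
    intro u v hpt hDw S hS
    by_cases hSu : S = pt u
    · rw [hSu, setDist_zero_of_mem (hptm u), hpt, setDist_zero_of_mem (hptm v)]
    · have hout : ∀ w ∈ S, w ∉ pt u := by
        intro w hwS hwp
        exact hSu ((hptu w S hS hwS).trans (hptu w (pt u) (hptQ u) hwp).symm)
      rw [setDist_eq_sInf_D, setDist_eq_sInf_D]
      congr 1
      exact Set.image_congr (fun w hw => hDw w (hout w hw))
  -- twins x s
  have hγ : ∀ s t : Fin a, pt (.x s) = pt (.x t) → s = t := by
    intro s t hpt
    have := hloc (.x s) (.x t) (hsame _ _ hpt ?_)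
    · injection this
    · intro w hw
      cases w with
      | c => rfl
      | x u =>
        have hsu : s ≠ u := fun he => hw (by rw [← he]; exact hptm (Vtx.x s))
        have htu : t ≠ u := fun he => hw (by rw [← he, hpt]; exact hptm (Vtx.x t))
        simp [D, hsu, htu]
      | m k => rfl
      | l k => rfl
  -- a twin leaf and a leg cannot produce the same pair of parts
  have hβ : ∀ (j : Legs a b) (s : Fin a),
      pt (.m j) = pt (.x s) → pt (.l j) = pt (.x s) → False := by
    intro j s h1 h2
    have := hloc (.x s) (.m j) (hsame _ _ h1.symm ?_)
    · exact absurd this (by simp)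
    · intro w hw
      cases w with
      | c => rfl
      | x u =>
        have hsu : s ≠ u := fun he => hw (by rw [← he]; exact hptm _)
        simp [D, hsu]
      | m k =>
        have hjk : j ≠ k := fun he => hw (by rw [← he, ← h1]; exact hptm _)
        simp [D, hjk]
      | l k =>
        have hjk : j ≠ k := fun he => hw (by rw [← he, ← h2]; exact hptm _)
        simp [D, hjk]
  -- two different legs cannot produce the same pair of parts
  have hα : ∀ j k : Legs a b, pt (.m j) = pt (.m k) → pt (.l j) = pt (.l k) → j = k := by
    intro j k h1 h2
    by_contra hjk
    have hall : ∀ S ∈ Q,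
        setDist (G a (Legs a b)) (.m j) S = setDist (G a (Legs a b)) (.m k) S := by
      intro S hS
      by_cases hSm : S = pt (.m j)
      · rw [hSm, setDist_zero_of_mem (hptm _), h1, setDist_zero_of_mem (hptm _)]
      · have hmj : Vtx.m j ∉ S := fun hmem => hSm (hptu _ S hS hmem)
        have hmk : Vtx.m k ∉ S := fun hmem => hSm ((hptu _ S hS hmem).trans h1.symm)
        by_cases hlj : Vtx.l j ∈ S
        · have hlk : Vtx.l k ∈ S := by
            rw [hptu _ S hS hlj, h2]; exact hptm _
          have d1 : setDist (G a (Legs a b)) (.m j) S = 1 := by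
            refine le_antisymm ?_
              (le_setDist ⟨_, hlj⟩ (fun w hw => D_pos (fun he => hmj (he ▸ hw))))
            calc setDist (G a (Legs a b)) (.m j) S ≤ D (.m j) (.l j) := setDist_le hlj
            _ = 1 := by simp [D]
          have d2 : setDist (G a (Legs a b)) (.m k) S = 1 := by
            refine le_antisymm ?_
              (le_setDist ⟨_, hlk⟩ (fun w hw => D_pos (fun he => hmk (he ▸ hw))))
            calc setDist (G a (Legs a b)) (.m k) S ≤ D (.m k) (.l k) := setDist_le hlk
            _ = 1 := by simp [D]
          rw [d1, d2]
        · have hlk : Vtx.l k ∉ S :=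
            fun hmem => hlj (by rw [hptu (Vtx.l k) S hS hmem, ← h2]; exact hptm _)
          rw [setDist_eq_sInf_D, setDist_eq_sInf_D]
          congr 1
          refine Set.image_congr (fun w hw => ?_)
          cases w with
          | c => rfl
          | x u => rfl
          | m i =>
            have hji : j ≠ i := fun he => hmj (he ▸ hw)
            have hki : k ≠ i := fun he => hmk (he ▸ hw)
            simp [D, hji, hki]
          | l i =>
            have hji : j ≠ i := fun he => hlj (he ▸ hw)
            have hki : k ≠ i := fun he => hlk (he ▸ hw)
            simp [D, hji, hki]
    have := hloc _ _ hall
    exact hjk (by injection this)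
  -- the injection into pairs of parts
  let Φ : (Legs a b ⊕ Fin a) → (↥Q × ↥Q) := fun z =>
    match z with
    | .inl j => (⟨pt (.m j), hptQ _⟩, ⟨pt (.l j), hptQ _⟩)
    | .inr s => (⟨pt (.x s), hptQ _⟩, ⟨pt (.x s), hptQ _⟩)
  have hΦ : Function.Injective Φ := by
    rintro (j | s) (k | t) h <;>
      simp only [Φ, Prod.mk.injEq, Subtype.mk.injEq] at h
    · exact congrArg _ (hα j k h.1 h.2)
    · exact (hβ j t h.1 h.2).elim
    · exact (hβ k s h.1.symm h.2.symm).elim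
    · exact congrArg _ (hγ s t h.1)
  have hQfin : Finite ↥Q := hfin.to_subtype
  have hcard := Nat.card_le_card_of_injective Φ hΦ
  rw [Nat.card_sum, Nat.card_prod, Nat.card_eq_fintype_card (α := Fin a), Fintype.card_fin,
    Nat.card_coe_set_eq] at hcard
  have hN := card_Legs (a := a) (b := b) ha hab hb2
  by_contra hbk
  push_neg at hbk
  have hk : Q.ncard ≤ b - 1 := by omega
  have hm : Q.ncard * Q.ncard ≤ (b - 1) * (b - 1) := Nat.mul_le_mul hk hk
  have h2 : Nat.card (Legs a b) + a ≤ (b - 1) * (b - 1) := le_trans hcard hm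
  rw [← hN] at h2
  omega

include ha hab hb2 hP in
lemma partitionDim_eq : partitionDim (G a (Legs a b)) = b := by
  have hmem : b ∈ {k | ∃ P', IsLocatingPartition (G a (Legs a b)) P' ∧ P'.ncard = k} :=
    ⟨Pn a b, ⟨Pn_partition ha hab hb2 hP, Pn_locating ha hab hb2 hP⟩,
      Pn_ncard ha hab hb2 hP⟩
  refine le_antisymm (Nat.sInf_le hmem) ?_
  obtain ⟨Q, hQ, hQc⟩ := Nat.sInf_mem (⟨b, hmem⟩ :
    Set.Nonempty {k | ∃ P', IsLocatingPartition (G a (Legs a b)) P' ∧ P'.ncard = k})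
  calc b ≤ Q.ncard := lower_bound ha hab hb2 hP Q hQ
  _ = _ := hQc

end Lower

/-! ### Generic small lemmas about `partitionDim` -/

section Generic

variable {W : Type} [Fintype W]

lemma setDist_zero_of_mem' (G' : SimpleGraph W) {u : W} {S : Set W} (h : u ∈ S) :
    setDist G' u S = 0 :=
  Nat.eq_zero_of_le_zero (Nat.sInf_le ⟨u, h, SimpleGraph.dist_self⟩)

lemma pdim_pos [Nonempty W] (G' : SimpleGraph W) :
    ∀ k ∈ {k | ∃ P : Set (Set W), IsLocatingPartition G' P ∧ P.ncard = k}, 1 ≤ k := by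
  rintro k ⟨P, ⟨⟨hP0, hPu⟩, hloc⟩, rfl⟩
  by_contra hk
  have h0 : P.ncard = 0 := by omega
  have hPe : P = ∅ := by
    rcases (Set.ncard_eq_zero (Set.toFinite P)).mp h0 with h
    exact h
  obtain ⟨S, ⟨hSP, -⟩, -⟩ := hPu (Classical.arbitrary W)
  rw [hPe] at hSP
  exact hSP

lemma two_le_pdim (G' : SimpleGraph W) (u v : W) (huv : u ≠ v) :
    ∀ k ∈ {k | ∃ P : Set (Set W), IsLocatingPartition G' P ∧ P.ncard = k}, 2 ≤ k := by
  rintro k ⟨P, ⟨⟨hP0, hPu⟩, hloc⟩, rfl⟩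
  by_contra hk
  have hpos : 1 ≤ P.ncard := by
    have : Nonempty W := ⟨u⟩
    exact pdim_pos G' P.ncard ⟨P, ⟨⟨hP0, hPu⟩, hloc⟩, rfl⟩
  have h1 : P.ncard = 1 := by omega
  obtain ⟨S, hS⟩ := Set.ncard_eq_one.mp h1
  subst hS
  have hu : u ∈ S := by
    obtain ⟨S', ⟨hS'P, huS⟩, -⟩ := hPu u
    rwa [Set.mem_singleton_iff.mp hS'P] at huS
  have hv : v ∈ S := by
    obtain ⟨S', ⟨hS'P, hvS⟩, -⟩ := hPu v
    rwa [Set.mem_singleton_iff.mp hS'P] at hvS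
  refine huv (hloc u v ?_)
  rintro S' (rfl : S' = S)
  rw [setDist_zero_of_mem' G' hu, setDist_zero_of_mem' G' hv]

end Generic

/-! ### The path P4 : the case a = 1, b = 2 -/

section P4

def S1 : Set (Vtx 1 Unit) := {Vtx.c, Vtx.x 0}
def S2 : Set (Vtx 1 Unit) := {Vtx.m (), Vtx.l ()}

lemma memc1 : (Vtx.c : Vtx 1 Unit) ∈ S1 := Or.inl rfl
lemma memx1 : (Vtx.x 0 : Vtx 1 Unit) ∈ S1 := Or.inr rfl
lemma memm2 : (Vtx.m () : Vtx 1 Unit) ∈ S2 := Or.inl rfl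
lemma meml2 : (Vtx.l () : Vtx 1 Unit) ∈ S2 := Or.inr rfl

lemma sdc2 : setDist (G 1 Unit) .c S2 = 1 := by
  refine setDist_eq ⟨.m (), memm2, by simp [D]⟩ ?_
  rintro w (rfl | rfl) <;> simp [D]

lemma sdx2 : setDist (G 1 Unit) (.x 0) S2 = 2 := by
  refine setDist_eq ⟨.m (), memm2, by simp [D]⟩ ?_
  rintro w (rfl | rfl) <;> simp [D]

lemma sdm1 : setDist (G 1 Unit) (.m ()) S1 = 1 := by
  refine setDist_eq ⟨.c, memc1, by simp [D]⟩ ?_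
  rintro w (rfl | rfl) <;> simp [D]

lemma sdl1 : setDist (G 1 Unit) (.l ()) S1 = 2 := by
  refine setDist_eq ⟨.c, memc1, by simp [D]⟩ ?_
  rintro w (rfl | rfl) <;> simp [D]

lemma pdim_P4 : partitionDim (G 1 Unit) = 2 := by
  have hmem : 2 ∈ {k | ∃ P : Set (Set (Vtx 1 Unit)),
      IsLocatingPartition (G 1 Unit) P ∧ P.ncard = k} := by
    refine ⟨{S1, S2}, ⟨⟨?_, ?_⟩, ?_⟩, ?_⟩
    · rintro (h | h)
      · exact (h ▸ memc1 : Vtx.c ∈ (∅ : Set (Vtx 1 Unit)))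
      · exact ((Set.mem_singleton_iff.mp h) ▸ memm2 : Vtx.m () ∈ (∅ : Set (Vtx 1 Unit)))
    · intro v
      cases v with
      | c =>
        refine ⟨S1, ⟨Or.inl rfl, memc1⟩, ?_⟩
        rintro S' ⟨(rfl | rfl), hv⟩
        · rfl
        · rcases hv with h | h <;> exact absurd h (by simp)
      | x s =>
        obtain rfl : s = 0 := Subsingleton.elim s 0
        refine ⟨S1, ⟨Or.inl rfl, memx1⟩, ?_⟩
        rintro S' ⟨(rfl | rfl), hv⟩
        · rfl
        · rcases hv with h | h <;> exact absurd h (by simp)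
      | m j =>
        cases j
        refine ⟨S2, ⟨Or.inr rfl, memm2⟩, ?_⟩
        rintro S' ⟨(rfl | rfl), hv⟩
        · rcases hv with h | h <;> exact absurd h (by simp)
        · rfl
      | l j =>
        cases j
        refine ⟨S2, ⟨Or.inr rfl, meml2⟩, ?_⟩
        rintro S' ⟨(rfl | rfl), hv⟩
        · rcases hv with h | h <;> exact absurd h (by simp)
        · rfl
    · intro u v h
      have h1 := h S1 (Or.inl rfl)
      have h2 := h S2 (Or.inr rfl)
      cases u with
      | c =>
        cases v with
        | c => rfl
        | x s =>
          obtain rfl : s = 0 := Subsingleton.elim s 0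
          rw [sdc2, sdx2] at h2
          omega
        | m j =>
          cases j
          rw [setDist_zero_of_mem' _ memc1, sdm1] at h1
          omega
        | l j =>
          cases j
          rw [setDist_zero_of_mem' _ memc1, sdl1] at h1
          omega
      | x s =>
        obtain rfl : s = 0 := Subsingleton.elim s 0
        cases v with
        | c =>
          rw [sdx2, sdc2] at h2
          omega
        | x t => exact congrArg _ (Subsingleton.elim _ _)
        | m j =>
          cases j
          rw [setDist_zero_of_mem' _ memx1, sdm1] at h1
          omega
        | l j =>
          cases j
          rw [setDist_zero_of_mem' _ memx1, sdl1] at h1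
          omega
      | m j =>
        cases j
        cases v with
        | c =>
          rw [setDist_zero_of_mem' _ memc1, sdm1] at h1
          omega
        | x s =>
          obtain rfl : s = 0 := Subsingleton.elim s 0
          rw [setDist_zero_of_mem' _ memx1, sdm1] at h1
          omega
        | m k => cases k; rfl
        | l k =>
          cases k
          rw [sdm1, sdl1] at h1
          omega
      | l j =>
        cases j
        cases v with
        | c =>
          rw [setDist_zero_of_mem' _ memc1, sdl1] at h1
          omega
        | x s =>
          obtain rfl : s = 0 := Subsingleton.elim s 0
          rw [setDist_zero_of_mem' _ memx1, sdl1] at h1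
          omega
        | m k =>
          cases k
          rw [sdl1, sdm1] at h1
          omega
        | l k => cases k; rfl
    · refine Set.ncard_pair ?_
      intro hS
      have : (Vtx.c : Vtx 1 Unit) ∈ S2 := hS ▸ memc1
      rcases this with h | h <;> exact absurd h (by simp)
  refine le_antisymm (Nat.sInf_le hmem) ?_
  obtain ⟨Q, hQ, hQc⟩ := Nat.sInf_mem (⟨2, hmem⟩ :
    Set.Nonempty {k | ∃ P : Set (Set (Vtx 1 Unit)),
      IsLocatingPartition (G 1 Unit) P ∧ P.ncard = k})
  have := two_le_pdim (G 1 Unit) (Vtx.c) (Vtx.m ()) (by simp) Q.ncard ⟨Q, hQ, rfl⟩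
  unfold partitionDim
  omega

end P4

/-! ### The one-point case a = b = 1 -/

section Point

lemma twinNumber_unit : twinNumber (⊥ : SimpleGraph Unit) = 1 := by
  have htc : ∀ u : Unit, twinClass (⊥ : SimpleGraph Unit) u = {u} := by
    intro u
    ext v
    constructor
    · intro _; exact Subsingleton.elim v u
    · rintro rfl
      show _ = _
      rfl
  have hmem : 1 ∈ {k | ∃ u : Unit, (twinClass (⊥ : SimpleGraph Unit) u).ncard = k} :=
    ⟨(), by rw [htc]; exact Set.ncard_singleton _⟩
  have hub : ∀ k ∈ {k | ∃ u : Unit, (twinClass (⊥ : SimpleGraph Unit) u).ncard = k},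
      k ≤ 1 := by
    rintro k ⟨u, rfl⟩
    rw [htc]
    simp [Set.ncard_singleton]
  exact le_antisymm (csSup_le ⟨1, hmem⟩ hub) (le_csSup ⟨1, hub⟩ hmem)

lemma pdim_unit : partitionDim (⊥ : SimpleGraph Unit) = 1 := by
  have hmem : 1 ∈ {k | ∃ P : Set (Set Unit),
      IsLocatingPartition (⊥ : SimpleGraph Unit) P ∧ P.ncard = k} := by
    refine ⟨{Set.univ}, ⟨⟨?_, ?_⟩, ?_⟩, Set.ncard_singleton _⟩
    · intro h
      have : (() : Unit) ∈ (∅ : Set Unit) := (Set.mem_singleton_iff.mp h) ▸ trivial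
      exact this
    · intro v
      exact ⟨Set.univ, ⟨rfl, trivial⟩, fun S' hS' => hS'.1⟩
    · intro u v _
      exact Subsingleton.elim u v
  refine le_antisymm (Nat.sInf_le hmem) ?_
  obtain ⟨Q, hQ, hQc⟩ := Nat.sInf_mem (⟨1, hmem⟩ :
    Set.Nonempty {k | ∃ P : Set (Set Unit),
      IsLocatingPartition (⊥ : SimpleGraph Unit) P ∧ P.ncard = k})
  have := pdim_pos (⊥ : SimpleGraph Unit) Q.ncard ⟨Q, hQ, rfl⟩
  unfold partitionDim
  omega

lemma isTree_unit : (⊥ : SimpleGraph Unit).IsTree := by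
  constructor
  · rw [connected_iff]
    exact ⟨fun u v => (Subsingleton.elim u v) ▸ SimpleGraph.Reachable.refl u, ⟨()⟩⟩
  · exact SimpleGraph.isAcyclic_bot

end Point

end TwinTree


/-- For all integers `1 ≤ a ≤ b` there is a tree `T` with `τ(T) = a` and
`β_p(T) = b`. -/
theorem exists_tree_twinNumber_partitionDim (a b : ℕ) (ha : 1 ≤ a)
    (hab : a ≤ b) :
    ∃ (V : Type) (_ : Fintype V) (T : SimpleGraph V),
      T.IsTree ∧ twinNumber T = a ∧ partitionDim T = b := by
  by_cases hb1 : b = 1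
  · subst hb1
    obtain rfl : a = 1 := by omega
    exact ⟨Unit, inferInstance, ⊥, TwinTree.isTree_unit, TwinTree.twinNumber_unit,
      TwinTree.pdim_unit⟩
  · by_cases hP4 : a = 1 ∧ b = 2
    · obtain ⟨rfl, rfl⟩ := hP4
      exact ⟨TwinTree.Vtx 1 Unit, inferInstance, TwinTree.G 1 Unit, TwinTree.isTree,
        TwinTree.twinNumber_eq le_rfl (Or.inr ⟨()⟩), TwinTree.pdim_P4⟩
    · have hb2 : 2 ≤ b := by omega
      have hA : 2 ≤ a ∨ Nonempty (TwinTree.Legs a b) := by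
        rcases le_or_gt 2 a with h2 | h2
        · exact Or.inl h2
        · have ha1 : a = 1 := by omega
          have hb3 : 3 ≤ b := by omega
          exact Or.inr ⟨⟨⟨1, by omega⟩, ⟨⟨2, by omega⟩, show (1:ℕ) ≠ 0 by omega,
            by simp [Fin.ext_iff], fun h0 => absurd h0 (show (2:ℕ) ≠ 0 by omega)⟩⟩⟩
      exact ⟨TwinTree.Vtx a (TwinTree.Legs a b), inferInstance,
        TwinTree.G a (TwinTree.Legs a b), TwinTree.isTree,
        TwinTree.twinNumber_eq ha hA, TwinTree.partitionDim_eq ha hab hb2 hP4⟩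
end
end

section
/- For every integer k ≥ 2, the complete k-ary tree T(k,2) of height 2 satisfies τ(T(k,2)) = k and β_p(T(k,2)) = k + 1. -/
open Classical SimpleGraph

noncomputable section

/-- The complete `k`-ary tree of height 2: root `none`, children
`some (Sum.inl i)` for `i : Fin k`, and grandchildren `some (Sum.inr (i, j))`,
where `some (Sum.inr (i, j))` is a child of `some (Sum.inl i)`. -/
def karyTree2 (k : ℕ) : SimpleGraph (Option (Fin k ⊕ Fin k × Fin k)) :=
  SimpleGraph.fromRel (fun x y =>
    (x = none ∧ ∃ i : Fin k, y = some (Sum.inl i)) ∨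
    (∃ (i : Fin k) (j : Fin k), x = some (Sum.inl i) ∧ y = some (Sum.inr (i, j))))



namespace KT2

variable {k : ℕ}

abbrev VV (k : ℕ) := Option (Fin k ⊕ Fin k × Fin k)

def D : VV k → VV k → ℕ
  | none, none => 0
  | none, some (Sum.inl _) => 1
  | none, some (Sum.inr _) => 2
  | some (Sum.inl _), none => 1
  | some (Sum.inr _), none => 2
  | some (Sum.inl i), some (Sum.inl i') => if i = i' then 0 else 2
  | some (Sum.inl i), some (Sum.inr (i', _)) => if i = i' then 1 else 3
  | some (Sum.inr (i, _)), some (Sum.inl i') => if i = i' then 1 else 3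
  | some (Sum.inr (i, j)), some (Sum.inr (i', j')) =>
      if i = i' then (if j = j' then 0 else 2) else 4

lemma adj_iff {x y : VV k} : (karyTree2 k).Adj x y ↔ x ≠ y ∧
    ((x = none ∧ ∃ i : Fin k, y = some (Sum.inl i)) ∨
     (∃ (i : Fin k) (j : Fin k), x = some (Sum.inl i) ∧ y = some (Sum.inr (i, j))) ∨
     (y = none ∧ ∃ i : Fin k, x = some (Sum.inl i)) ∨
     (∃ (i : Fin k) (j : Fin k), y = some (Sum.inl i) ∧ x = some (Sum.inr (i, j)))) := by
  rw [karyTree2, SimpleGraph.fromRel_adj]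
  aesop

lemma adj_root_a (i : Fin k) : (karyTree2 k).Adj none (some (Sum.inl i)) := by
  rw [adj_iff]; exact ⟨by simp, Or.inl ⟨rfl, i, rfl⟩⟩

lemma adj_a_b (i j : Fin k) :
    (karyTree2 k).Adj (some (Sum.inl i)) (some (Sum.inr (i, j))) := by
  rw [adj_iff]; exact ⟨by simp, Or.inr (Or.inl ⟨i, j, rfl, rfl⟩)⟩

lemma D_lip {x y : VV k} (h : (karyTree2 k).Adj x y) (z : VV k) :
    D x z ≤ D y z + 1 := by
  rw [adj_iff] at h
  obtain ⟨-, h⟩ := h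
  rcases z with _ | (t | ⟨t, s⟩) <;>
  · rcases h with ⟨rfl, i, rfl⟩ | ⟨i, j, rfl, rfl⟩ | ⟨rfl, i, rfl⟩ | ⟨i, j, rfl, rfl⟩ <;>
      simp only [D] <;> first | (split_ifs <;> omega) | omega

lemma D_self (u : VV k) : D u u = 0 := by
  rcases u with _ | (i | ⟨i, j⟩) <;> simp [D]

lemma D_le_walk_length {u v : VV k} (p : (karyTree2 k).Walk u v) : D u v ≤ p.length := by
  induction p with
  | nil => simp [D_self]
  | cons h q ih =>
      calc D _ _ ≤ D _ _ + 1 := D_lip h _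
      _ ≤ q.length + 1 := by omega
      _ = _ := by simp

lemma exists_walk (u v : VV k) :
    ∃ p : (karyTree2 k).Walk u v, p.length = D u v := by
  rcases u with _ | (i | ⟨i, j⟩) <;> rcases v with _ | (i' | ⟨i', j'⟩)
  · exact ⟨.nil, by simp [D]⟩
  · exact ⟨.cons (adj_root_a i') .nil, by simp [D]⟩
  · exact ⟨.cons (adj_root_a i') (.cons (adj_a_b i' j') .nil), by simp [D]⟩
  · exact ⟨.cons (adj_root_a i).symm .nil, by simp [D]⟩
  · by_cases h : i = i'
    · subst h; exact ⟨.nil, by simp [D]⟩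
    · exact ⟨.cons (adj_root_a i).symm (.cons (adj_root_a i') .nil), by simp [D, h]⟩
  · by_cases h : i = i'
    · subst h; exact ⟨.cons (adj_a_b i j') .nil, by simp [D]⟩
    · exact ⟨.cons (adj_root_a i).symm (.cons (adj_root_a i') (.cons (adj_a_b i' j') .nil)),
        by simp [D, h]⟩
  · exact ⟨.cons (adj_a_b i j).symm (.cons (adj_root_a i).symm .nil), by simp [D]⟩
  · by_cases h : i = i'
    · subst h; exact ⟨.cons (adj_a_b i j).symm .nil, by simp [D]⟩
    · exact ⟨.cons (adj_a_b i j).symm (.cons (adj_root_a i).symm (.cons (adj_root_a i') .nil)),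
        by simp [D, h]⟩
  · by_cases h : i = i'
    · subst h
      by_cases h2 : j = j'
      · subst h2; exact ⟨.nil, by simp [D]⟩
      · exact ⟨.cons (adj_a_b i j).symm (.cons (adj_a_b i j') .nil), by simp [D, h2]⟩
    · exact ⟨.cons (adj_a_b i j).symm (.cons (adj_root_a i).symm
        (.cons (adj_root_a i') (.cons (adj_a_b i' j') .nil))), by simp [D, h]⟩

lemma dist_eq (u v : VV k) : (karyTree2 k).dist u v = D u v := by
  obtain ⟨p, hp⟩ := exists_walk u v
  refine le_antisymm (hp ▸ SimpleGraph.dist_le p) ?_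
  obtain ⟨q, hq⟩ := p.reachable.exists_walk_length_eq_dist
  exact hq ▸ D_le_walk_length q


section helpers
variable {W : Type*} {G : SimpleGraph W} {u w : W} {S : Set W} {m : ℕ}

lemma setDist_le (h : w ∈ S) : setDist G u S ≤ G.dist u w := Nat.sInf_le ⟨w, h, rfl⟩

lemma le_setDist (hS : S.Nonempty) (h : ∀ w ∈ S, m ≤ G.dist u w) : m ≤ setDist G u S :=
  le_csInf (hS.image _) (by rintro n ⟨w, hw, rfl⟩; exact h w hw)

lemma setDist_eq' (h1 : w ∈ S) (h2 : G.dist u w = m) (h3 : ∀ x ∈ S, m ≤ G.dist u x) :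
    setDist G u S = m :=
  le_antisymm (h2 ▸ setDist_le h1) (le_setDist ⟨w, h1⟩ h3)

lemma setDist_zero_of_mem (h : u ∈ S) : setDist G u S = 0 :=
  Nat.le_zero.mp (le_of_le_of_eq (setDist_le h) (SimpleGraph.dist_self))

lemma setDist_congr {v : W} (huv : ∀ x ∈ S, G.dist u x = G.dist v x) :
    setDist G u S = setDist G v S := by
  unfold setDist
  rw [Set.image_congr huv]

end helpers

-- notation for vertices
def rt (k : ℕ) : VV k := none
def av (i : Fin k) : VV k := some (Sum.inl i)
def bv (i j : Fin k) : VV k := some (Sum.inr (i, j))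

lemma av_ne_bv {i i' j' : Fin k} : av i ≠ bv i' j' := by simp [av, bv]
lemma rt_ne_av {i : Fin k} : rt k ≠ av i := by simp [av, rt]
lemma rt_ne_bv {i j : Fin k} : rt k ≠ bv i j := by simp [bv, rt]
lemma av_inj {i i' : Fin k} (h : av i = av i') : i = i' := by simpa [av] using h
lemma bv_inj {i j i' j' : Fin k} (h : bv i j = bv i' j') : i = i' ∧ j = j' := by
  simpa [bv, Prod.ext_iff] using h

-- neighborhood characterizations
lemma adj_b_iff {i j : Fin k} {x : VV k} :
    (karyTree2 k).Adj (bv i j) x ↔ x = av i := by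
  rw [adj_iff]; simp [av, bv]; aesop

lemma adj_a_iff {i : Fin k} {x : VV k} :
    (karyTree2 k).Adj (av i) x ↔ x = rt k ∨ ∃ j, x = bv i j := by
  rw [adj_iff]; simp [av, bv, rt]; aesop

lemma adj_root_iff {x : VV k} :
    (karyTree2 k).Adj (rt k) x ↔ ∃ i, x = av i := by
  rw [adj_iff]; simp [av, rt]; aesop


lemma exists_ne_fin (hk : 2 ≤ k) (i : Fin k) : ∃ i' : Fin k, i' ≠ i := by
  by_cases h : i = ⟨0, by omega⟩
  · exact ⟨⟨1, by omega⟩, by simp [h, Fin.ext_iff]⟩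
  · exact ⟨⟨0, by omega⟩, fun hh => h hh.symm⟩

lemma isTwin_iff {u v : VV k} :
    IsTwin (karyTree2 k) u v ↔
      ∀ x, ((karyTree2 k).Adj u x ∧ x ≠ v ↔ (karyTree2 k).Adj v x ∧ x ≠ u) := by
  unfold IsTwin
  rw [Set.ext_iff]
  apply forall_congr'
  intro x
  simp [SimpleGraph.mem_neighborSet, adj_comm]

lemma twinClass_b (hk : 2 ≤ k) (i j : Fin k) :
    twinClass (karyTree2 k) (bv i j) = {x | ∃ j', x = bv i j'} := by
  ext v
  simp only [twinClass, Set.mem_setOf_eq]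
  constructor
  · intro ht
    rw [isTwin_iff] at ht
    rcases v with _ | (t | ⟨t, s⟩)
    · obtain ⟨i', hi'⟩ := exists_ne_fin hk i
      have h1 : (karyTree2 k).Adj (rt k) (av i') ∧ (av i' : VV k) ≠ bv i j :=
        ⟨adj_root_iff.mpr ⟨i', rfl⟩, av_ne_bv⟩
      have := ((ht (av i')).mpr h1).1
      rw [adj_b_iff] at this
      exact absurd (av_inj this) hi'
    · have h1 : (karyTree2 k).Adj (av t) (rt k) ∧ (rt k) ≠ bv i j :=
        ⟨adj_a_iff.mpr (Or.inl rfl), rt_ne_bv⟩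
      have := ((ht (rt k)).mpr h1).1
      rw [adj_b_iff] at this
      exact absurd this rt_ne_av
    · by_cases hti : t = i
      · exact ⟨s, by rw [hti]; rfl⟩
      · have h1 : (karyTree2 k).Adj (bv i j) (av i) ∧ (av i : VV k) ≠ bv t s :=
          ⟨adj_b_iff.mpr rfl, av_ne_bv⟩
        replace h1 := ((ht (av i)).mp h1).1
        have this : (karyTree2 k).Adj (bv t s) (av i) := h1
        rw [adj_b_iff] at this
        exact absurd (av_inj this).symm hti
  · rintro ⟨j', rfl⟩
    rw [isTwin_iff]
    intro x
    rw [adj_b_iff, adj_b_iff]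
    constructor
    · rintro ⟨rfl, -⟩; exact ⟨rfl, av_ne_bv⟩
    · rintro ⟨rfl, -⟩; exact ⟨rfl, av_ne_bv⟩

lemma twinClass_a (hk : 2 ≤ k) (i : Fin k) :
    twinClass (karyTree2 k) (av i) = {av i} := by
  have hk1 : 0 < k := by omega
  ext v
  simp only [twinClass, Set.mem_setOf_eq, Set.mem_singleton_iff]
  constructor
  · intro ht
    rw [isTwin_iff] at ht
    rcases v with _ | (t | ⟨t, s⟩)
    · have h1 : (karyTree2 k).Adj (av i) (bv i ⟨0, hk1⟩) ∧ (bv i ⟨0, hk1⟩ : VV k) ≠ rt k :=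
        ⟨adj_a_iff.mpr (Or.inr ⟨_, rfl⟩), fun h => rt_ne_bv h.symm⟩
      replace h1 := ((ht _).mp h1).1
      have this : (karyTree2 k).Adj (rt k) (bv i ⟨0, hk1⟩) := h1
      rw [adj_root_iff] at this
      obtain ⟨i', hi'⟩ := this
      exact absurd hi' (fun h => av_ne_bv h.symm)
    · by_cases hti : i = t
      · rw [hti]; rfl
      · have h1 : (karyTree2 k).Adj (av i) (bv i ⟨0, hk1⟩) ∧ (bv i ⟨0, hk1⟩ : VV k) ≠ av t :=
          ⟨adj_a_iff.mpr (Or.inr ⟨_, rfl⟩), fun h => av_ne_bv h.symm⟩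
        replace h1 := ((ht _).mp h1).1
        have this : (karyTree2 k).Adj (av t) (bv i ⟨0, hk1⟩) := h1
        rw [adj_a_iff] at this
        rcases this with h | ⟨j', hj'⟩
        · exact absurd h (fun h => rt_ne_bv h.symm)
        · exact absurd (bv_inj hj').1 hti
    · have h1 : (karyTree2 k).Adj (av i) (rt k) ∧ (rt k : VV k) ≠ bv t s :=
        ⟨adj_a_iff.mpr (Or.inl rfl), rt_ne_bv⟩
      replace h1 := ((ht _).mp h1).1
      have this : (karyTree2 k).Adj (bv t s) (rt k) := h1
      rw [adj_b_iff] at this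
      exact absurd this rt_ne_av
  · rintro rfl; rw [isTwin_iff]; intro x; tauto

lemma twinClass_root (hk : 2 ≤ k) :
    twinClass (karyTree2 k) (rt k) = {rt k} := by
  have hk1 : 0 < k := by omega
  ext v
  simp only [twinClass, Set.mem_setOf_eq, Set.mem_singleton_iff]
  constructor
  · intro ht
    rw [isTwin_iff] at ht
    rcases v with _ | (t | ⟨t, s⟩)
    · rfl
    · have h1 : (karyTree2 k).Adj (av t) (bv t ⟨0, hk1⟩) ∧ (bv t ⟨0, hk1⟩ : VV k) ≠ rt k :=
        ⟨adj_a_iff.mpr (Or.inr ⟨_, rfl⟩), fun h => rt_ne_bv h.symm⟩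
      replace h1 := ((ht _).mpr h1).1
      have this : (karyTree2 k).Adj (rt k) (bv t ⟨0, hk1⟩) := h1
      rw [adj_root_iff] at this
      obtain ⟨i', hi'⟩ := this
      exact absurd hi' (fun h => av_ne_bv h.symm)
    · obtain ⟨i', hi'⟩ := exists_ne_fin hk t
      have h1 : (karyTree2 k).Adj (rt k) (av i') ∧ (av i' : VV k) ≠ bv t s :=
        ⟨adj_root_iff.mpr ⟨i', rfl⟩, av_ne_bv⟩
      replace h1 := ((ht _).mp h1).1
      have this : (karyTree2 k).Adj (bv t s) (av i') := h1
      rw [adj_b_iff] at this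
      exact absurd (av_inj this) hi'
  · rintro rfl; rw [isTwin_iff]; intro x; tauto

lemma twinClass_b_ncard (hk : 2 ≤ k) (i j : Fin k) :
    (twinClass (karyTree2 k) (bv i j)).ncard = k := by
  rw [twinClass_b hk]
  have : {x : VV k | ∃ j', x = bv i j'} = Set.range (fun j' => bv i j') := by
    ext x; simp [Set.range, eq_comm]
  rw [this, ← Set.image_univ,
    Set.ncard_image_of_injective _ (fun a b h => (bv_inj h).2), Set.ncard_univ]
  simp

lemma twinNumber_eq (hk : 2 ≤ k) :
    sSup {n | ∃ u : VV k, (twinClass (karyTree2 k) u).ncard = n} = k := by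
  have hk1 : 0 < k := by omega
  have hmem : k ∈ {n | ∃ u : VV k, (twinClass (karyTree2 k) u).ncard = n} :=
    ⟨bv ⟨0, hk1⟩ ⟨0, hk1⟩, twinClass_b_ncard hk _ _⟩
  have hbdd : ∀ n ∈ {n | ∃ u : VV k, (twinClass (karyTree2 k) u).ncard = n}, n ≤ k := by
    rintro n ⟨u, rfl⟩
    rcases u with _ | (t | ⟨t, s⟩)
    · rw [show (none : VV k) = rt k from rfl, twinClass_root hk]; simp; omega
    · rw [show (some (Sum.inl t) : VV k) = av t from rfl, twinClass_a hk]; simp; omega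
    · rw [show (some (Sum.inr (t, s)) : VV k) = bv t s from rfl, twinClass_b_ncard hk]
  exact le_antisymm (csSup_le ⟨k, hmem⟩ hbdd) (le_csSup ⟨k, hbdd⟩ hmem)


def SJ (t : Fin k) : Set (VV k) := {x | x = av t ∨ ∃ i, x = bv i t}

lemma av_mem_SJ (t : Fin k) : av t ∈ SJ t := Or.inl rfl
lemma bv_mem_SJ (i t : Fin k) : bv i t ∈ SJ t := Or.inr ⟨i, rfl⟩

lemma setDist_singleton {W : Type*} {G : SimpleGraph W} {u w : W} :
    setDist G u {w} = G.dist u w := by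
  simp [setDist, Set.image_singleton]

lemma sd_rt_SJ (t : Fin k) : setDist (karyTree2 k) (rt k) (SJ t) = 1 := by
  refine setDist_eq' (av_mem_SJ t) ?_ ?_
  · rw [dist_eq]; simp [D, av, rt]
  · rintro x (rfl | ⟨i, rfl⟩) <;> rw [dist_eq] <;> simp [D, av, bv, rt]

lemma sd_av_SJ (i t : Fin k) :
    setDist (karyTree2 k) (av i) (SJ t) = if i = t then 0 else 1 := by
  split_ifs with h
  · subst h; exact setDist_zero_of_mem (av_mem_SJ i)
  · refine setDist_eq' (bv_mem_SJ i t) ?_ ?_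
    · rw [dist_eq]; simp [D, av, bv]
    · rintro x (rfl | ⟨i', rfl⟩) <;> rw [dist_eq] <;> simp [D, av, bv, rt] <;>
        split_ifs <;> omega

lemma sd_bv_SJ (i j t : Fin k) :
    setDist (karyTree2 k) (bv i j) (SJ t) =
      if t = j then 0 else if t = i then 1 else 2 := by
  split_ifs with h1 h2
  · subst h1; exact setDist_zero_of_mem (bv_mem_SJ i t)
  · subst h2
    refine setDist_eq' (av_mem_SJ t) ?_ ?_
    · rw [dist_eq]; simp [D, av, bv]
    · rintro x (rfl | ⟨i', rfl⟩) <;> rw [dist_eq] <;> simp [D, av, bv] <;>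
        split_ifs <;> omega
  · refine setDist_eq' (bv_mem_SJ i t) ?_ ?_
    · rw [dist_eq]; simp [D, bv, Ne.symm h1]
    · rintro x (rfl | ⟨i', rfl⟩) <;> rw [dist_eq] <;>
        simp [D, av, bv, Ne.symm h2] <;> split_ifs <;> omega

lemma sd_rt_root : setDist (karyTree2 k) (rt k) {rt k} = 0 :=
  setDist_zero_of_mem rfl

lemma sd_av_root (i : Fin k) : setDist (karyTree2 k) (av i) {rt k} = 1 := by
  rw [setDist_singleton, dist_eq]; simp [D, av, rt]

lemma sd_bv_root (i j : Fin k) : setDist (karyTree2 k) (bv i j) {rt k} = 2 := by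
  rw [setDist_singleton, dist_eq]; simp [D, bv, rt]

def PP (k : ℕ) : Set (Set (VV k)) := insert {rt k} (Set.range (SJ (k := k)))

lemma rt_notmem_SJ (t : Fin k) : rt k ∉ SJ t := by
  rintro (h | ⟨i, h⟩)
  exacts [rt_ne_av h, rt_ne_bv h]

lemma av_mem_SJ_iff {i t : Fin k} : av i ∈ SJ t ↔ i = t := by
  constructor
  · rintro (h | ⟨i', h⟩)
    · exact av_inj h
    · exact absurd h av_ne_bv
  · rintro rfl; exact av_mem_SJ i

lemma bv_mem_SJ_iff {i j t : Fin k} : bv i j ∈ SJ t ↔ j = t := by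
  constructor
  · rintro (h | ⟨i', h⟩)
    · exact absurd h.symm av_ne_bv
    · exact (bv_inj h).2
  · rintro rfl; exact bv_mem_SJ i j

lemma SJ_injective : Function.Injective (SJ (k := k)) := by
  intro t t' h
  have := h ▸ av_mem_SJ t
  exact av_mem_SJ_iff.mp this

lemma PP_ncard (k : ℕ) : (PP k).ncard = k + 1 := by
  rw [PP, Set.ncard_insert_of_notMem]
  · rw [← Set.image_univ, Set.ncard_image_of_injective _ SJ_injective, Set.ncard_univ]
    simp
  · rintro ⟨t, ht⟩
    exact rt_notmem_SJ t (ht ▸ rfl)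

lemma PP_isPartition (k : ℕ) : Setoid.IsPartition (PP k) := by
  constructor
  · rintro (h | ⟨t, ht⟩)
    · exact (Set.singleton_ne_empty (rt k)) h.symm
    · exact Set.notMem_empty (av t) (ht ▸ av_mem_SJ t)
  · intro u
    rcases u with _ | (i | ⟨i, j⟩)
    · refine ⟨{rt k}, ⟨Or.inl rfl, rfl⟩, ?_⟩
      rintro S ⟨hS | ⟨t, rfl⟩, huS⟩
      · exact hS
      · exact absurd huS (rt_notmem_SJ t)
    · refine ⟨SJ i, ⟨Or.inr ⟨i, rfl⟩, av_mem_SJ i⟩, ?_⟩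
      rintro S ⟨hS | ⟨t, rfl⟩, huS⟩
      · exact absurd (hS ▸ huS : (av i : VV k) ∈ {rt k}) (fun h => rt_ne_av (Eq.symm h))
      · have : (av i : VV k) ∈ SJ t := huS
        rw [av_mem_SJ_iff] at this
        rw [this]
    · refine ⟨SJ j, ⟨Or.inr ⟨j, rfl⟩, bv_mem_SJ i j⟩, ?_⟩
      rintro S ⟨hS | ⟨t, rfl⟩, huS⟩
      · exact absurd (hS ▸ huS : (bv i j : VV k) ∈ {rt k}) (fun h => rt_ne_bv (Eq.symm h))
      · have : (bv i j : VV k) ∈ SJ t := huS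
        rw [bv_mem_SJ_iff] at this
        rw [this]

lemma PP_locating (k : ℕ) :
    ∀ u v : VV k, (∀ S ∈ PP k, setDist (karyTree2 k) u S = setDist (karyTree2 k) v S) →
      u = v := by
  intro u v h
  have h0 := h {rt k} (Or.inl rfl)
  have hS : ∀ t : Fin k, setDist (karyTree2 k) u (SJ t) = setDist (karyTree2 k) v (SJ t) :=
    fun t => h (SJ t) (Or.inr ⟨t, rfl⟩)
  rcases u with _ | (i | ⟨i, j⟩) <;> rcases v with _ | (i' | ⟨i', j'⟩)
  · rfl
  · rw [show setDist (karyTree2 k) none {rt k} = 0 from sd_rt_root,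
      show setDist (karyTree2 k) (some (Sum.inl i')) {rt k} = 1 from sd_av_root i'] at h0
    omega
  · rw [show setDist (karyTree2 k) none {rt k} = 0 from sd_rt_root,
      show setDist (karyTree2 k) (some (Sum.inr (i', j'))) {rt k} = 2 from sd_bv_root i' j'] at h0
    omega
  · rw [show setDist (karyTree2 k) (some (Sum.inl i)) {rt k} = 1 from sd_av_root i,
      show setDist (karyTree2 k) none {rt k} = 0 from sd_rt_root] at h0
    omega
  · have := hS i
    rw [show setDist (karyTree2 k) (some (Sum.inl i)) (SJ i) = _ from sd_av_SJ i i,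
      show setDist (karyTree2 k) (some (Sum.inl i')) (SJ i) = _ from sd_av_SJ i' i] at this
    by_cases hii : i' = i
    · rw [hii]
    · rw [if_pos rfl, if_neg hii] at this
      omega
  · rw [show setDist (karyTree2 k) (some (Sum.inl i)) {rt k} = 1 from sd_av_root i,
      show setDist (karyTree2 k) (some (Sum.inr (i', j'))) {rt k} = 2 from sd_bv_root i' j'] at h0
    omega
  · rw [show setDist (karyTree2 k) (some (Sum.inr (i, j))) {rt k} = 2 from sd_bv_root i j,
      show setDist (karyTree2 k) none {rt k} = 0 from sd_rt_root] at h0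
    omega
  · rw [show setDist (karyTree2 k) (some (Sum.inr (i, j))) {rt k} = 2 from sd_bv_root i j,
      show setDist (karyTree2 k) (some (Sum.inl i')) {rt k} = 1 from sd_av_root i'] at h0
    omega
  · -- both leaves
    have hj := hS j
    rw [show setDist (karyTree2 k) (some (Sum.inr (i, j))) (SJ j) = _ from sd_bv_SJ i j j,
      show setDist (karyTree2 k) (some (Sum.inr (i', j'))) (SJ j) = _ from sd_bv_SJ i' j' j]
      at hj
    simp only [if_pos rfl] at hj
    have hjj : j = j' := by
      by_contra hne
      rw [if_neg hne] at hj
      split_ifs at hj <;> omega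
    subst hjj
    have hii : i = i' := by
      by_contra hne
      have h1 := hS i
      have h2 := hS i'
      rw [show setDist (karyTree2 k) (some (Sum.inr (i, j))) (SJ i) = _ from sd_bv_SJ i j i,
        show setDist (karyTree2 k) (some (Sum.inr (i', j))) (SJ i) = _ from sd_bv_SJ i' j i]
        at h1
      rw [show setDist (karyTree2 k) (some (Sum.inr (i, j))) (SJ i') = _ from sd_bv_SJ i j i',
        show setDist (karyTree2 k) (some (Sum.inr (i', j))) (SJ i') = _ from sd_bv_SJ i' j i']
        at h2
      by_cases hij : i = j
      · subst hij
        split_ifs at h2 with hc1 hc2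
        · exact hne hc1.symm
        · omega
        · exact hc2 rfl
      · split_ifs at h1 <;>
          first
          | omega
          | (exact hij ‹i = j›)
          | (exact hne ‹i = i'›)
          | (exact ‹¬i = i› rfl)
    exact congrArg₂ (fun x y => (bv x y : VV k)) hii rfl


-- distance facts for the lower bound
lemma dist_bb {i j j' : Fin k} (h : j ≠ j') :
    (karyTree2 k).dist (bv i j) (bv i j') = 2 := by
  rw [dist_eq]; simp [D, bv, h]

lemma dist_ab {i j : Fin k} : (karyTree2 k).dist (av i) (bv i j) = 1 := by
  rw [dist_eq]; simp [D, av, bv]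

lemma dist_ra {t : Fin k} : (karyTree2 k).dist (rt k) (av t) = 1 := by
  rw [dist_eq]; simp [D, av, rt]

lemma two_le_dist_b {i j : Fin k} {w : VV k} (h1 : w ≠ bv i j) (h2 : w ≠ av i) :
    2 ≤ (karyTree2 k).dist (bv i j) w := by
  rw [dist_eq]
  rcases w with _ | (t | ⟨t, s⟩)
  · simp [D, bv]
  · have hit : ¬i = t := fun h => h2 (by simp [av, h])
    simp only [D, bv]
    rw [if_neg hit]
    omega
  · have hts : ¬(i = t ∧ j = s) := fun ⟨h, h'⟩ => h1 (by simp [bv, h, h'])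
    simp only [D, bv]
    split_ifs with hc1 hc2
    · exact absurd ⟨hc1, hc2⟩ hts
    · omega
    · omega

lemma one_le_dist_av {i : Fin k} {w : VV k} (h : w ≠ av i) :
    1 ≤ (karyTree2 k).dist (av i) w := by
  rw [dist_eq]
  rcases w with _ | (t | ⟨t, s⟩)
  · simp [D, av]
  · have hit : ¬i = t := fun hh => h (by simp [av, hh])
    simp only [D, av]
    rw [if_neg hit]
    omega
  · simp only [D, av]
    split_ifs <;> omega

lemma one_le_dist_rt {w : VV k} (h : w ≠ rt k) :
    1 ≤ (karyTree2 k).dist (rt k) w := by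
  rw [dist_eq]
  rcases w with _ | (t | ⟨t, s⟩)
  · exact absurd rfl h
  · simp [D, rt]
  · simp [D, rt]

lemma dist_twin_b {i j j' : Fin k} {w : VV k} (h1 : w ≠ bv i j) (h2 : w ≠ bv i j') :
    (karyTree2 k).dist (bv i j) w = (karyTree2 k).dist (bv i j') w := by
  rw [dist_eq, dist_eq]
  rcases w with _ | (t | ⟨t, s⟩)
  · simp [D, bv]
  · simp [D, bv]
  · have hts : ¬(i = t ∧ j = s) := fun ⟨h, h'⟩ => h1 (by simp [bv, h, h'])
    have hts' : ¬(i = t ∧ j' = s) := fun ⟨h, h'⟩ => h2 (by simp [bv, h, h'])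
    simp only [D, bv]
    split_ifs <;>
      first
      | rfl
      | (exact absurd ⟨‹i = t›, ‹j = s›⟩ hts)
      | (exact absurd ⟨‹i = t›, ‹j' = s›⟩ hts')

-- the lower bound
lemma lower_bound (hk : 2 ≤ k) {P : Set (Set (VV k))}
    (hpart : Setoid.IsPartition P)
    (hloc : ∀ u v : VV k,
      (∀ S ∈ P, setDist (karyTree2 k) u S = setDist (karyTree2 k) v S) → u = v) :
    k + 1 ≤ P.ncard := by
  classical
  have hk1 : 0 < k := by omega
  have hfex : ∀ u : VV k, ∃ T, (T ∈ P ∧ u ∈ T) ∧ ∀ S ∈ P, u ∈ S → S = T := by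
    intro u
    obtain ⟨T, hT, hu⟩ := hpart.2 u
    exact ⟨T, hT, fun S hS hus => hu S ⟨hS, hus⟩⟩
  choose f hf using hfex
  have hfP : ∀ u, f u ∈ P := fun u => (hf u).1.1
  have hfmem : ∀ u, u ∈ f u := fun u => (hf u).1.2
  have hfuniq : ∀ u S, S ∈ P → u ∈ S → S = f u := fun u => (hf u).2
  have hnotmem : ∀ (u : VV k) S, S ∈ P → S ≠ f u → u ∉ S :=
    fun u S hS hne hu => hne (hfuniq u S hS hu)
  -- injectivity on each leaf class
  have claim1 : ∀ i : Fin k, Function.Injective (fun j : Fin k => f (bv i j)) := by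
    intro i j j' heq0
    have heq : f (bv i j) = f (bv i j') := heq0
    have : (bv i j : VV k) = bv i j' := by
      apply hloc
      intro S hS
      by_cases hSf : S = f (bv i j)
      · subst hSf
        rw [setDist_zero_of_mem (hfmem (bv i j)),
          setDist_zero_of_mem (heq ▸ hfmem (bv i j'))]
      · have hnj : (bv i j : VV k) ∉ S := hnotmem _ S hS hSf
        have hnj' : (bv i j' : VV k) ∉ S := hnotmem _ S hS (heq ▸ hSf)
        exact setDist_congr (fun x hx =>
          dist_twin_b (fun h => hnj (h ▸ hx)) (fun h => hnj' (h ▸ hx)))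
    exact (bv_inj this).2
  haveI : Finite (VV k) := by infer_instance
  have hPfin : P.Finite := Set.toFinite P
  haveI : Finite ↥P := hPfin.to_subtype
  have gdef : ∀ i : Fin k, Function.Injective (fun j : Fin k => (⟨f (bv i j), hfP _⟩ : ↥P)) := by
    intro i j j' heq
    exact claim1 i (Subtype.ext_iff.mp heq)
  have hklecard : k ≤ P.ncard := by
    calc k = Nat.card (Fin k) := by simp
      _ ≤ Nat.card ↥P := Nat.card_le_card_of_injective _ (gdef ⟨0, hk1⟩)
      _ = P.ncard := Nat.card_coe_set_eq P
  rcases Nat.lt_or_ge k P.ncard with h | h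
  · omega
  exfalso
  have hcard : P.ncard = k := le_antisymm h hklecard
  -- each leaf-class map is surjective onto P
  have hsurjb : ∀ (i : Fin k) (S : Set (VV k)), S ∈ P → ∃ j, f (bv i j) = S := by
    intro i S hS
    have hbij : Function.Bijective (fun j : Fin k => (⟨f (bv i j), hfP _⟩ : ↥P)) := by
      rw [Nat.bijective_iff_injective_and_card]
      refine ⟨gdef i, ?_⟩
      rw [Nat.card_coe_set_eq, hcard]
      simp
    obtain ⟨j, hj⟩ := hbij.2 ⟨S, hS⟩
    exact ⟨j, Subtype.ext_iff.mp hj⟩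
  -- the parent map is injective
  have claim2 : Function.Injective (fun i : Fin k => f (av i)) := by
    intro i i' heq
    by_contra hne
    simp only at heq
    obtain ⟨jx, hjx⟩ := hsurjb i (f (av i)) (hfP _)
    obtain ⟨jy, hjy⟩ := hsurjb i' (f (av i)) (hfP _)
    have : (bv i jx : VV k) = bv i' jy := by
      apply hloc
      intro S hS
      by_cases hSf : S = f (av i)
      · subst hSf
        rw [setDist_zero_of_mem (hjx ▸ hfmem (bv i jx)),
          setDist_zero_of_mem (hjy ▸ hfmem (bv i' jy))]
      · have hx : (bv i jx : VV k) ∉ S := hnotmem _ S hS (hjx ▸ hSf)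
        have hy : (bv i' jy : VV k) ∉ S := hnotmem _ S hS (hjy ▸ hSf)
        have hai : (av i : VV k) ∉ S := hnotmem _ S hS hSf
        have hai' : (av i' : VV k) ∉ S := hnotmem _ S hS (heq ▸ hSf)
        obtain ⟨j2, hj2⟩ := hsurjb i S hS
        obtain ⟨j2', hj2'⟩ := hsurjb i' S hS
        have hm2 : (bv i j2 : VV k) ∈ S := hj2 ▸ hfmem (bv i j2)
        have hm2' : (bv i' j2' : VV k) ∈ S := hj2' ▸ hfmem (bv i' j2')
        have hxne : jx ≠ j2 := fun hh => hx (hh ▸ hm2)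
        have hyne : jy ≠ j2' := fun hh => hy (hh ▸ hm2')
        rw [setDist_eq' hm2 (dist_bb hxne)
            (fun w hw => two_le_dist_b (fun hh => hx (hh ▸ hw)) (fun hh => hai (hh ▸ hw))),
          setDist_eq' hm2' (dist_bb hyne)
            (fun w hw => two_le_dist_b (fun hh => hy (hh ▸ hw)) (fun hh => hai' (hh ▸ hw)))]
    exact hne (bv_inj this).1
  -- parent map surjective
  have hsurja : ∀ (S : Set (VV k)), S ∈ P → ∃ i, f (av i) = S := by
    intro S hS
    have hbij : Function.Bijective (fun i : Fin k => (⟨f (av i), hfP _⟩ : ↥P)) := by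
      rw [Nat.bijective_iff_injective_and_card]
      refine ⟨fun i i' hh => claim2 (Subtype.ext_iff.mp hh), ?_⟩
      rw [Nat.card_coe_set_eq, hcard]
      simp
    obtain ⟨i, hi⟩ := hbij.2 ⟨S, hS⟩
    exact ⟨i, Subtype.ext_iff.mp hi⟩
  -- final contradiction: root vs some child
  obtain ⟨i0, hi0⟩ := hsurja (f (rt k)) (hfP _)
  have : (rt k : VV k) = av i0 := by
    apply hloc
    intro S hS
    by_cases hSf : S = f (rt k)
    · subst hSf
      rw [setDist_zero_of_mem (hfmem (rt k)), setDist_zero_of_mem (hi0 ▸ hfmem (av i0))]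
    · have hr : (rt k : VV k) ∉ S := hnotmem _ S hS hSf
      have ha : (av i0 : VV k) ∉ S := hnotmem _ S hS (hi0 ▸ hSf)
      obtain ⟨t, ht⟩ := hsurja S hS
      obtain ⟨j2, hj2⟩ := hsurjb i0 S hS
      have hmt : (av t : VV k) ∈ S := ht ▸ hfmem (av t)
      have hmj : (bv i0 j2 : VV k) ∈ S := hj2 ▸ hfmem (bv i0 j2)
      rw [setDist_eq' hmt dist_ra (fun w hw => one_le_dist_rt (fun hh => hr (hh ▸ hw))),
        setDist_eq' hmj dist_ab (fun w hw => one_le_dist_av (fun hh => ha (hh ▸ hw)))]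
  exact rt_ne_av this

end KT2
/-- For every `k ≥ 2`, the complete `k`-ary tree of height 2 has twin number `k`
and partition dimension `k + 1`. -/
theorem karyTree2_twinNumber_partitionDim (k : ℕ) (hk : 2 ≤ k) :
    twinNumber (karyTree2 k) = k ∧ partitionDim (karyTree2 k) = k + 1 := by
  constructor
  · exact KT2.twinNumber_eq hk
  · have hmem : k + 1 ∈ {n | ∃ P : Set (Set (KT2.VV k)),
        IsLocatingPartition (karyTree2 k) P ∧ P.ncard = n} :=
      ⟨KT2.PP k, ⟨KT2.PP_isPartition k, KT2.PP_locating k⟩, KT2.PP_ncard k⟩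
    have hlb : ∀ m ∈ {n | ∃ P : Set (Set (KT2.VV k)),
        IsLocatingPartition (karyTree2 k) P ∧ P.ncard = n}, k + 1 ≤ m := by
      rintro m ⟨P, ⟨hpart, hloc⟩, rfl⟩
      exact KT2.lower_bound hk hpart hloc
    exact le_antisymm (Nat.sInf_le hmem) (le_csInf ⟨k + 1, hmem⟩ hlb)
end
end

section
/- Let k, h be integers with k ≥ 1 and h ≥ k + 2. Then the tree T*(k,h) satisfies τ(T*(k,h)) = k and β_p(T*(k,h)) = h. -/
open Classical SimpleGraph

noncomputable section

/-- The tree `T*(k,h)`: vertices `x = Sum.inl (Sum.inl ())`,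
`z = Sum.inl (Sum.inr ())`, leaves `z_i = Sum.inr (Sum.inl i)` for `i : Fin k`,
vertices `x_{(i,j)} = Sum.inr (Sum.inr (Sum.inl (i,j)))` and
`y_{(i,j)} = Sum.inr (Sum.inr (Sum.inr (i,j)))` for `i j : Fin (h-1)`; with
edges `x x_{(i,j)}`, `x_{(i,j)} y_{(i,j)}`, `x z` and `z z_i`. -/
def tStar (k h : ℕ) :
    SimpleGraph ((Unit ⊕ Unit) ⊕ (Fin k ⊕ (Fin (h - 1) × Fin (h - 1) ⊕ Fin (h - 1) × Fin (h - 1)))) :=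
  SimpleGraph.fromRel (fun a b =>
    (a = Sum.inl (Sum.inl ()) ∧
      ∃ p : Fin (h - 1) × Fin (h - 1), b = Sum.inr (Sum.inr (Sum.inl p))) ∨
    (∃ p : Fin (h - 1) × Fin (h - 1),
      a = Sum.inr (Sum.inr (Sum.inl p)) ∧ b = Sum.inr (Sum.inr (Sum.inr p))) ∨
    (a = Sum.inl (Sum.inl ()) ∧ b = Sum.inl (Sum.inr ())) ∨
    (a = Sum.inl (Sum.inr ()) ∧ ∃ i : Fin k, b = Sum.inr (Sum.inl i)))

namespace TStarAux

variable {k h : ℕ}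

abbrev V (k h : ℕ) := (Unit ⊕ Unit) ⊕ (Fin k ⊕ (Fin (h - 1) × Fin (h - 1) ⊕ Fin (h - 1) × Fin (h - 1)))

def vX : V k h := Sum.inl (Sum.inl ())
def vZ : V k h := Sum.inl (Sum.inr ())
def vz (i : Fin k) : V k h := Sum.inr (Sum.inl i)
def vx (p : Fin (h - 1) × Fin (h - 1)) : V k h := Sum.inr (Sum.inr (Sum.inl p))
def vy (p : Fin (h - 1) × Fin (h - 1)) : V k h := Sum.inr (Sum.inr (Sum.inr p))

/-- the distance function -/
def D : V k h → V k h → ℕ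
  | .inl (.inl _), .inl (.inl _) => 0
  | .inl (.inl _), .inl (.inr _) => 1
  | .inl (.inl _), .inr (.inl _) => 2
  | .inl (.inl _), .inr (.inr (.inl _)) => 1
  | .inl (.inl _), .inr (.inr (.inr _)) => 2
  | .inl (.inr _), .inl (.inl _) => 1
  | .inl (.inr _), .inl (.inr _) => 0
  | .inl (.inr _), .inr (.inl _) => 1
  | .inl (.inr _), .inr (.inr (.inl _)) => 2
  | .inl (.inr _), .inr (.inr (.inr _)) => 3
  | .inr (.inl _), .inl (.inl _) => 2
  | .inr (.inl _), .inl (.inr _) => 1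
  | .inr (.inl i), .inr (.inl j) => if i = j then 0 else 2
  | .inr (.inl _), .inr (.inr (.inl _)) => 3
  | .inr (.inl _), .inr (.inr (.inr _)) => 4
  | .inr (.inr (.inl _)), .inl (.inl _) => 1
  | .inr (.inr (.inl _)), .inl (.inr _) => 2
  | .inr (.inr (.inl _)), .inr (.inl _) => 3
  | .inr (.inr (.inl p)), .inr (.inr (.inl q)) => if p = q then 0 else 2
  | .inr (.inr (.inl p)), .inr (.inr (.inr q)) => if p = q then 1 else 3
  | .inr (.inr (.inr _)), .inl (.inl _) => 2
  | .inr (.inr (.inr _)), .inl (.inr _) => 3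
  | .inr (.inr (.inr _)), .inr (.inl _) => 4
  | .inr (.inr (.inr p)), .inr (.inr (.inl q)) => if p = q then 1 else 3
  | .inr (.inr (.inr p)), .inr (.inr (.inr q)) => if p = q then 0 else 4

lemma adjXZ : (tStar k h).Adj vX vZ := by
  simp [tStar, SimpleGraph.fromRel_adj, vX, vZ]

lemma adjXx (p : Fin (h - 1) × Fin (h - 1)) : (tStar k h).Adj vX (vx p) := by
  simp [tStar, SimpleGraph.fromRel_adj, vX, vx]
  exact ⟨p.1, p.2, rfl⟩

lemma adjxy (p : Fin (h - 1) × Fin (h - 1)) : (tStar k h).Adj (vx p) (vy p) := by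
  simp [tStar, SimpleGraph.fromRel_adj, vx, vy]
  exact ⟨p.1, p.2, rfl⟩

lemma adjZz (i : Fin k) : (tStar k h).Adj vZ (vz i) := by
  simp [tStar, SimpleGraph.fromRel_adj, vZ, vz]

lemma D_self (u : V k h) : D u u = 0 := by
  rcases u with (⟨⟩|⟨⟩)|(i|(p|p)) <;> simp [D]

lemma D_symm (u v : V k h) : D u v = D v u := by
  rcases u with (⟨⟩|⟨⟩)|(i|(p|p)) <;> rcases v with (⟨⟩|⟨⟩)|(j|(q|q)) <;>
    simp [D] <;> split_ifs <;> simp_all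

lemma adj_cases {a b : V k h} (hab : (tStar k h).Adj a b) :
    (a = vX ∧ ∃ p, b = vx p) ∨ (∃ p, a = vx p ∧ b = vy p) ∨ (a = vX ∧ b = vZ) ∨
      (a = vZ ∧ ∃ i, b = vz i) ∨
    (b = vX ∧ ∃ p, a = vx p) ∨ (∃ p, b = vx p ∧ a = vy p) ∨ (b = vX ∧ a = vZ) ∨
      (b = vZ ∧ ∃ i, a = vz i) := by
  rw [tStar, SimpleGraph.fromRel_adj] at hab
  unfold vX vZ vz vx vy
  obtain ⟨-, hab | hab⟩ := hab
  · rcases hab with ⟨ha, p, hb⟩ | ⟨p, ha, hb⟩ | ⟨ha, hb⟩ | ⟨ha, i, hb⟩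
    · exact Or.inl ⟨ha, p, hb⟩
    · exact Or.inr (Or.inl ⟨p, ha, hb⟩)
    · exact Or.inr (Or.inr (Or.inl ⟨ha, hb⟩))
    · exact Or.inr (Or.inr (Or.inr (Or.inl ⟨ha, i, hb⟩)))
  · rcases hab with ⟨hb, p, ha⟩ | ⟨p, hb, ha⟩ | ⟨hb, ha⟩ | ⟨hb, i, ha⟩
    · exact Or.inr (Or.inr (Or.inr (Or.inr (Or.inl ⟨hb, p, ha⟩))))
    · exact Or.inr (Or.inr (Or.inr (Or.inr (Or.inr (Or.inl ⟨p, hb, ha⟩)))))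
    · exact Or.inr (Or.inr (Or.inr (Or.inr (Or.inr (Or.inr (Or.inl ⟨hb, ha⟩))))))
    · exact Or.inr (Or.inr (Or.inr (Or.inr (Or.inr (Or.inr (Or.inr ⟨hb, i, ha⟩))))))

lemma D_lip (u a b : V k h) (hab : (tStar k h).Adj a b) : D u b ≤ D u a + 1 := by
  rcases adj_cases hab with ⟨ha, p, hb⟩ | ⟨p, ha, hb⟩ | ⟨ha, hb⟩ | ⟨ha, i, hb⟩ |
    ⟨hb, p, ha⟩ | ⟨p, hb, ha⟩ | ⟨hb, ha⟩ | ⟨hb, i, ha⟩ <;> subst ha <;> subst hb <;>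
    rcases u with (⟨⟩|⟨⟩)|(l|(r|r)) <;>
    simp only [D, vX, vZ, vz, vx, vy] <;> first | omega | (split_ifs <;> omega)

end TStarAux

namespace TStarAux2
open TStarAux

variable {k h : ℕ}

section chains
variable {W : Type*} {G : SimpleGraph W} {u a b c v : W}

lemma dle1 (h1 : G.Adj u v) : G.dist u v ≤ 1 := by
  simpa using SimpleGraph.dist_le (Walk.cons h1 Walk.nil)

lemma dle2 (h1 : G.Adj u a) (h2 : G.Adj a v) : G.dist u v ≤ 2 := by
  simpa using SimpleGraph.dist_le (Walk.cons h1 (Walk.cons h2 Walk.nil))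

lemma dle3 (h1 : G.Adj u a) (h2 : G.Adj a b) (h3 : G.Adj b v) : G.dist u v ≤ 3 := by
  simpa using SimpleGraph.dist_le (Walk.cons h1 (Walk.cons h2 (Walk.cons h3 Walk.nil)))

lemma dle4 (h1 : G.Adj u a) (h2 : G.Adj a b) (h3 : G.Adj b c) (h4 : G.Adj c v) :
    G.dist u v ≤ 4 := by
  simpa using
    SimpleGraph.dist_le (Walk.cons h1 (Walk.cons h2 (Walk.cons h3 (Walk.cons h4 Walk.nil))))

end chains

lemma dist_le_D (u v : V k h) : (tStar k h).dist u v ≤ D u v := by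
  rcases u with (⟨⟩|⟨⟩)|(i|(p|p)) <;> rcases v with (⟨⟩|⟨⟩)|(j|(q|q))
  · simp [SimpleGraph.dist_self]
  · exact dle1 adjXZ
  · exact dle2 adjXZ (adjZz j)
  · exact dle1 (adjXx q)
  · exact dle2 (adjXx q) (adjxy q)
  · exact dle1 adjXZ.symm
  · simp [SimpleGraph.dist_self]
  · exact dle1 (adjZz j)
  · exact dle2 adjXZ.symm (adjXx q)
  · exact dle3 adjXZ.symm (adjXx q) (adjxy q)
  · exact dle2 (adjZz i).symm adjXZ.symm
  · exact dle1 (adjZz i).symm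
  · rcases eq_or_ne i j with rfl | e
    · simp [SimpleGraph.dist_self, D]
    · exact le_trans (dle2 (adjZz i).symm (adjZz j)) (by simp [D, e])
  · exact dle3 (adjZz i).symm adjXZ.symm (adjXx q)
  · exact dle4 (adjZz i).symm adjXZ.symm (adjXx q) (adjxy q)
  · exact dle1 (adjXx p).symm
  · exact dle2 (adjXx p).symm adjXZ
  · exact dle3 (adjXx p).symm adjXZ (adjZz j)
  · rcases eq_or_ne p q with rfl | e
    · simp [SimpleGraph.dist_self, D]
    · exact le_trans (dle2 (adjXx p).symm (adjXx q)) (by simp [D, e])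
  · rcases eq_or_ne p q with rfl | e
    · exact le_trans (dle1 (adjxy p)) (by simp [D])
    · exact le_trans (dle3 (adjXx p).symm (adjXx q) (adjxy q)) (by simp [D, e])
  · exact dle2 (adjxy p).symm (adjXx p).symm
  · exact dle3 (adjxy p).symm (adjXx p).symm adjXZ
  · exact dle4 (adjxy p).symm (adjXx p).symm adjXZ (adjZz j)
  · rcases eq_or_ne p q with rfl | e
    · exact le_trans (dle1 (adjxy p).symm) (by simp [D])
    · exact le_trans (dle3 (adjxy p).symm (adjXx p).symm (adjXx q)) (by simp [D, e])
  · rcases eq_or_ne p q with rfl | e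
    · simp [SimpleGraph.dist_self, D]
    · exact le_trans (dle4 (adjxy p).symm (adjXx p).symm (adjXx q) (adjxy q)) (by simp [D, e])

lemma reach_X (v : V k h) : (tStar k h).Reachable vX v := by
  rcases v with (⟨⟩|⟨⟩)|(i|(p|p))
  · exact Reachable.refl _
  · exact adjXZ.reachable
  · exact adjXZ.reachable.trans (adjZz _).reachable
  · exact (adjXx _).reachable
  · exact (adjXx _).reachable.trans (adjxy _).reachable

lemma connected_tStar : (tStar k h).Connected := by
  rw [SimpleGraph.connected_iff]
  exact ⟨fun u v => ((reach_X u).symm.trans (reach_X v)), ⟨vX⟩⟩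

lemma D_le_len : ∀ {u v : V k h} (w : (tStar k h).Walk u v), D u v ≤ w.length := by
  intro u v w
  induction w with
  | nil => simp [D_self]
  | @cons a b c hadj w ih =>
    have h2 : D a c ≤ D b c + 1 := by
      rw [D_symm a c, D_symm b c]; exact D_lip c b a hadj.symm
    simpa using h2.trans (Nat.add_le_add_right ih 1)

lemma dist_eq (u v : V k h) : (tStar k h).dist u v = D u v := by
  refine le_antisymm (dist_le_D u v) ?_
  obtain ⟨w, hw⟩ := connected_tStar.exists_walk_length_eq_dist u v
  rw [← hw]; exact D_le_len w

end TStarAux2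

namespace TStarAux3
open TStarAux TStarAux2

variable {k h : ℕ}

lemma adj_iff_D (u w : V k h) : (tStar k h).Adj u w ↔ D u w = 1 := by
  rw [← SimpleGraph.dist_eq_one_iff_adj, dist_eq]

lemma twin_elim {u v : V k h} (htw : IsTwin (tStar k h) u v) (w : V k h) :
    (D u w = 1 ∧ w ≠ v) ↔ (D v w = 1 ∧ w ≠ u) := by
  have := Set.ext_iff.mp htw w
  simpa only [Set.mem_diff, SimpleGraph.mem_neighborSet, adj_iff_D,
    Set.mem_singleton_iff] using this

lemma isTwin_zz (i j : Fin k) : IsTwin (tStar k h) (vz i) (vz j) := by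
  unfold IsTwin
  ext w
  simp only [Set.mem_diff, SimpleGraph.mem_neighborSet, adj_iff_D, Set.mem_singleton_iff]
  rcases w with (⟨⟩|⟨⟩)|(l|(q|q)) <;>
    simp [D, vz, vZ] <;> split_ifs <;> simp_all

/-- some pair index -/
def p0 (hh : k + 2 ≤ h) : Fin (h - 1) × Fin (h - 1) :=
  (⟨0, by omega⟩, ⟨0, by omega⟩)

variable (hh : k + 2 ≤ h)
include hh

lemma twinClass_z (i : Fin k) : twinClass (tStar k h) (vz i) = Set.range vz := by
  ext v
  simp only [twinClass, Set.mem_setOf_eq, Set.mem_range]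
  constructor
  · intro htw
    rcases v with (⟨⟩|⟨⟩)|(j|(q|q))
    · -- v = vX
      exfalso
      have := (twin_elim htw (vx (p0 hh))).mpr ⟨by simp [D, vX, vZ, vz, vx, vy], by simp [vx, vz]⟩
      simp [D, vz, vx] at this
    · -- v = vZ
      exfalso
      have := (twin_elim htw vX).mpr ⟨by simp [D, vX, vZ], by simp [vX, vz]⟩
      simp [D, vz, vX] at this
    · exact ⟨j, rfl⟩
    · -- v = vx q
      exfalso
      have := (twin_elim htw vX).mpr ⟨by simp [D, vX, vx], by simp [vX, vz]⟩
      simp [D, vz, vX] at this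
    · -- v = vy q
      exfalso
      have := (twin_elim htw (vx q)).mpr ⟨by simp [D, vx, vy], by simp [vx, vz]⟩
      simp [D, vz, vx] at this
  · rintro ⟨j, rfl⟩
    exact isTwin_zz i j

lemma twinClass_X : twinClass (tStar k h) (vX : V k h) = {vX} := by
  ext v
  simp only [twinClass, Set.mem_setOf_eq, Set.mem_singleton_iff]
  constructor
  · intro htw
    rcases v with (⟨⟩|⟨⟩)|(j|(q|q))
    · rfl
    · exfalso
      have := (twin_elim htw (vx (p0 hh))).mp ⟨by simp [D, vX, vZ, vz, vx, vy], by simp [vx, vZ]⟩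
      simp [D, vX, vZ, vz, vx, vy] at this
    · exfalso
      have := (twin_elim htw (vx (p0 hh))).mp ⟨by simp [D, vX, vZ, vz, vx, vy], by simp [vx, vz]⟩
      simp [D, vX, vZ, vz, vx, vy] at this
    · exfalso
      have := (twin_elim htw vZ).mp ⟨by simp [D, vX, vZ], by simp [vZ, vx]⟩
      simp [D, vX, vZ, vz, vx, vy] at this
    · exfalso
      have := (twin_elim htw vZ).mp ⟨by simp [D, vX, vZ], by simp [vZ, vy]⟩
      simp [D, vX, vZ, vz, vx, vy] at this
  · rintro rfl; exact rfl

lemma twinClass_Z : twinClass (tStar k h) (vZ : V k h) = {vZ} := by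
  ext v
  simp only [twinClass, Set.mem_setOf_eq, Set.mem_singleton_iff]
  constructor
  · intro htw
    rcases v with (⟨⟩|⟨⟩)|(j|(q|q))
    · exfalso
      have := (twin_elim htw (vx (p0 hh))).mpr ⟨by simp [D, vX, vZ, vz, vx, vy], by simp [vx, vZ]⟩
      simp [D, vX, vZ, vz, vx, vy] at this
    · rfl
    · exfalso
      have := (twin_elim htw vX).mp ⟨by simp [D, vX, vZ], by simp [vX, vz]⟩
      simp [D, vX, vZ, vz, vx, vy] at this
    · exfalso
      have := (twin_elim htw (vy q)).mpr ⟨by simp [D, vx, vy], by simp [vy, vZ]⟩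
      simp [D, vX, vZ, vz, vx, vy] at this
    · exfalso
      have := (twin_elim htw (vx q)).mpr ⟨by simp [D, vx, vy], by simp [vx, vZ]⟩
      simp [D, vX, vZ, vz, vx, vy] at this
  · rintro rfl; exact rfl

lemma twinClass_x (p : Fin (h - 1) × Fin (h - 1)) :
    twinClass (tStar k h) (vx p : V k h) = {vx p} := by
  ext v
  simp only [twinClass, Set.mem_setOf_eq, Set.mem_singleton_iff]
  constructor
  · intro htw
    rcases v with (⟨⟩|⟨⟩)|(j|(q|q))
    · exfalso
      have := (twin_elim htw vZ).mpr ⟨by simp [D, vX, vZ], by simp [vZ, vx]⟩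
      simp [D, vX, vZ, vz, vx, vy] at this
    · exfalso
      have := (twin_elim htw (vy p)).mp ⟨by simp [D, vx, vy], by simp [vy, vZ]⟩
      simp [D, vX, vZ, vz, vx, vy] at this
    · exfalso
      have := (twin_elim htw vX).mp ⟨by simp [D, vX, vx], by simp [vX, vz]⟩
      simp [D, vX, vZ, vz, vx, vy] at this
    · rcases eq_or_ne p q with rfl | e
      · rfl
      · exfalso
        have := (twin_elim htw (vy p)).mp
          ⟨by simp [D, vx, vy], by simp [vy, vx]⟩
        simp [D, vX, vZ, vz, vx, vy, e.symm] at this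
    · rcases eq_or_ne p q with rfl | e
      · exfalso
        have := (twin_elim htw vX).mp ⟨by simp [D, vX, vx], by simp [vX, vy]⟩
        simp [D, vX, vZ, vz, vx, vy] at this
      · exfalso
        have := (twin_elim htw vX).mp ⟨by simp [D, vX, vx], by simp [vX, vy]⟩
        simp [D, vX, vZ, vz, vx, vy, e.symm] at this
  · rintro rfl; exact rfl

lemma twinClass_y (p : Fin (h - 1) × Fin (h - 1)) :
    twinClass (tStar k h) (vy p : V k h) = {vy p} := by
  ext v
  simp only [twinClass, Set.mem_setOf_eq, Set.mem_singleton_iff]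
  constructor
  · intro htw
    rcases v with (⟨⟩|⟨⟩)|(j|(q|q))
    · exfalso
      have := (twin_elim htw vZ).mpr ⟨by simp [D, vX, vZ], by simp [vZ, vy]⟩
      simp [D, vX, vZ, vz, vx, vy] at this
    · exfalso
      have := (twin_elim htw vX).mpr ⟨by simp [D, vX, vZ], by simp [vX, vy]⟩
      simp [D, vX, vZ, vz, vx, vy] at this
    · exfalso
      have := (twin_elim htw vZ).mpr ⟨by simp [D, vZ, vz], by simp [vZ, vy]⟩
      simp [D, vX, vZ, vz, vx, vy] at this
    · rcases eq_or_ne p q with rfl | e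
      · exfalso
        have := (twin_elim htw vX).mpr ⟨by simp [D, vX, vx], by simp [vX, vy]⟩
        simp [D, vX, vZ, vz, vx, vy] at this
      · exfalso
        have := (twin_elim htw vX).mpr ⟨by simp [D, vX, vx], by simp [vX, vy]⟩
        simp [D, vX, vZ, vz, vx, vy, e] at this
    · rcases eq_or_ne p q with rfl | e
      · rfl
      · exfalso
        have := (twin_elim htw (vx p)).mp ⟨by simp [D, vx, vy], by simp [vx, vy]⟩
        simp [D, vX, vZ, vz, vx, vy, e.symm] at this
  · rintro rfl; exact rfl

omit hh in
lemma vz_injective : Function.Injective (vz : Fin k → V k h) := by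
  intro a b hab
  simpa [vz] using hab

omit hh in
lemma ncard_range_vz : (Set.range (vz : Fin k → V k h)).ncard = k := by
  have : (Set.range (vz : Fin k → V k h)).ncard = Nat.card (Fin k) :=
    Nat.card_range_of_injective vz_injective
  simpa using this

lemma twinNumber_eq (hk : 1 ≤ k) : twinNumber (tStar k h) = k := by
  have hmem : k ∈ {n | ∃ u : V k h, (twinClass (tStar k h) u).ncard = n} :=
    ⟨vz ⟨0, hk⟩, by rw [twinClass_z hh]; exact ncard_range_vz⟩
  have hbound : ∀ n ∈ {n | ∃ u : V k h, (twinClass (tStar k h) u).ncard = n}, n ≤ k := by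
    rintro n ⟨u, rfl⟩
    rcases u with (⟨⟩|⟨⟩)|(j|(q|q))
    · rw [show (Sum.inl (Sum.inl _) : V k h) = vX from rfl, twinClass_X hh]
      simpa using hk
    · rw [show (Sum.inl (Sum.inr _) : V k h) = vZ from rfl, twinClass_Z hh]
      simpa using hk
    · rw [show (Sum.inr (Sum.inl j) : V k h) = vz j from rfl, twinClass_z hh, ncard_range_vz]
    · rw [show (Sum.inr (Sum.inr (Sum.inl q)) : V k h) = vx q from rfl, twinClass_x hh]
      simpa using hk
    · rw [show (Sum.inr (Sum.inr (Sum.inr q)) : V k h) = vy q from rfl, twinClass_y hh]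
      simpa using hk
  exact le_antisymm (csSup_le ⟨k, hmem⟩ hbound) (le_csSup ⟨k, hbound⟩ hmem)

end TStarAux3

namespace TStarUB
open TStarAux TStarAux2

variable {k h : ℕ}

lemma setDist_eq_sInf_D (u : V k h) (S : Set (V k h)) :
    setDist (tStar k h) u S = sInf (D u '' S) := by
  unfold setDist
  congr 1
  ext n
  constructor
  · rintro ⟨w, hw, rfl⟩; exact ⟨w, hw, (dist_eq u w).symm⟩
  · rintro ⟨w, hw, rfl⟩; exact ⟨w, hw, dist_eq u w⟩

lemma setDist_eq {u : V k h} {S : Set (V k h)} {m : ℕ}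
    (h1 : ∃ w ∈ S, D u w = m) (h2 : ∀ w ∈ S, m ≤ D u w) :
    setDist (tStar k h) u S = m := by
  rw [setDist_eq_sInf_D]
  obtain ⟨w, hw, hwm⟩ := h1
  refine le_antisymm (Nat.sInf_le ⟨w, hw, hwm⟩) (le_csInf ⟨m, w, hw, hwm⟩ ?_)
  rintro n ⟨w', hw', rfl⟩
  exact h2 w' hw'

/-- parts indexed by `Fin (h-1)` -/
def partA (t : Fin (h - 1)) : Set (V k h) :=
  {v | (∃ j, v = vx (t, j)) ∨ (∃ i, v = vy (i, t)) ∨ (∃ i : Fin k, v = vz i ∧ (i : ℕ) = (t : ℕ))}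

def partB : Set (V k h) := {vX, vZ}

def PP (k h : ℕ) : Set (Set (V k h)) := insert partB (Set.range partA)

lemma mem_partA_vx {t : Fin (h - 1)} {p : Fin (h - 1) × Fin (h - 1)} :
    vx p ∈ (partA t : Set (V k h)) ↔ t = p.1 := by
  simp only [partA, Set.mem_setOf_eq, vx, vy, vz]
  constructor
  · rintro (⟨j, hj⟩ | ⟨i, hi⟩ | ⟨i, hi, _⟩) <;> simp_all
  · rintro rfl; exact Or.inl ⟨p.2, by simp⟩

lemma mem_partA_vy {t : Fin (h - 1)} {p : Fin (h - 1) × Fin (h - 1)} :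
    vy p ∈ (partA t : Set (V k h)) ↔ t = p.2 := by
  simp only [partA, Set.mem_setOf_eq, vx, vy, vz]
  constructor
  · rintro (⟨j, hj⟩ | ⟨i, hi⟩ | ⟨i, hi, _⟩) <;> simp_all
  · rintro rfl; exact Or.inr (Or.inl ⟨p.1, by simp⟩)

lemma mem_partA_vz {t : Fin (h - 1)} {i : Fin k} :
    vz i ∈ (partA t : Set (V k h)) ↔ (i : ℕ) = (t : ℕ) := by
  simp only [partA, Set.mem_setOf_eq, vx, vy, vz]
  constructor
  · rintro (⟨j, hj⟩ | ⟨j, hj⟩ | ⟨j, hj, hj'⟩) <;> simp_all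
  · intro hit; exact Or.inr (Or.inr ⟨i, rfl, hit⟩)

lemma notMem_partA_vX {t : Fin (h - 1)} : (vX : V k h) ∉ partA t := by
  rintro (⟨j, hj⟩ | ⟨i, hi⟩ | ⟨i, hi, _⟩) <;> simp_all [vX, vx, vy, vz]

lemma notMem_partA_vZ {t : Fin (h - 1)} : (vZ : V k h) ∉ partA t := by
  rintro (⟨j, hj⟩ | ⟨i, hi⟩ | ⟨i, hi, _⟩) <;> simp_all [vZ, vx, vy, vz]

lemma mem_partA_elim {t : Fin (h - 1)} {w : V k h} (hw : w ∈ partA t) :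
    (∃ j, w = vx (t, j)) ∨ (∃ i, w = vy (i, t)) ∨ ∃ i : Fin k, w = vz i ∧ (i : ℕ) = (t : ℕ) := hw

lemma D_vz_vz (i j : Fin k) : D (vz i : V k h) (vz j) = if i = j then 0 else 2 := rfl
lemma D_vx_vx (p q : Fin (h - 1) × Fin (h - 1)) :
    D (vx p : V k h) (vx q) = if p = q then 0 else 2 := rfl
lemma D_vx_vy (p q : Fin (h - 1) × Fin (h - 1)) :
    D (vx p : V k h) (vy q) = if p = q then 1 else 3 := rfl
lemma D_vy_vx (p q : Fin (h - 1) × Fin (h - 1)) :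
    D (vy p : V k h) (vx q) = if p = q then 1 else 3 := rfl
lemma D_vy_vy (p q : Fin (h - 1) × Fin (h - 1)) :
    D (vy p : V k h) (vy q) = if p = q then 0 else 4 := rfl

lemma setDist_partB_X : setDist (tStar k h) vX partB = 0 := by
  refine setDist_eq ⟨vX, Or.inl rfl, D_self _⟩ fun w _ => Nat.zero_le _
lemma setDist_partB_Z : setDist (tStar k h) vZ partB = 0 := by
  refine setDist_eq ⟨vZ, Or.inr rfl, D_self _⟩ fun w _ => Nat.zero_le _
lemma setDist_partB_vz (i : Fin k) : setDist (tStar k h) (vz i) partB = 1 := by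
  refine setDist_eq ⟨vZ, Or.inr rfl, by simp [D, vz, vZ]⟩ ?_
  rintro w (rfl | rfl) <;> simp [D, vz, vZ, vX]
lemma setDist_partB_vx (p : Fin (h - 1) × Fin (h - 1)) :
    setDist (tStar k h) (vx p) partB = 1 := by
  refine setDist_eq ⟨vX, Or.inl rfl, by simp [D, vx, vX]⟩ ?_
  rintro w (rfl | rfl) <;> simp [D, vx, vZ, vX]
lemma setDist_partB_vy (p : Fin (h - 1) × Fin (h - 1)) :
    setDist (tStar k h) (vy p) partB = 2 := by
  refine setDist_eq ⟨vX, Or.inl rfl, by simp [D, vy, vX]⟩ ?_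
  rintro w (rfl | rfl) <;> simp [D, vy, vZ, vX]

lemma setDist_partA_X (t : Fin (h - 1)) : setDist (tStar k h) vX (partA t) = 1 := by
  refine setDist_eq ⟨vx (t, t), mem_partA_vx.mpr rfl, by simp [D, vx, vX]⟩ ?_
  intro w hw
  rcases mem_partA_elim hw with ⟨j, rfl⟩ | ⟨i, rfl⟩ | ⟨i, rfl, -⟩ <;> simp [D, vx, vy, vz, vX]

lemma setDist_partA_Z (t : Fin (h - 1)) :
    setDist (tStar k h) vZ (partA t) = if (t : ℕ) < k then 1 else 2 := by
  by_cases ht : (t : ℕ) < k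
  · rw [if_pos ht]
    refine setDist_eq ⟨vz ⟨t, ht⟩, mem_partA_vz.mpr rfl, by simp [D, vz, vZ]⟩ ?_
    intro w hw
    rcases mem_partA_elim hw with ⟨j, rfl⟩ | ⟨i, rfl⟩ | ⟨i, rfl, -⟩ <;> simp [D, vx, vy, vz, vZ]
  · rw [if_neg ht]
    refine setDist_eq ⟨vx (t, t), mem_partA_vx.mpr rfl, by simp [D, vx, vZ]⟩ ?_
    intro w hw
    rcases mem_partA_elim hw with ⟨j, rfl⟩ | ⟨i, rfl⟩ | ⟨i, rfl, hi⟩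
    · simp [D, vx, vZ]
    · simp [D, vy, vZ]
    · exact absurd (hi ▸ i.isLt) ht

lemma setDist_partA_vz (i : Fin k) (t : Fin (h - 1)) :
    setDist (tStar k h) (vz i) (partA t) =
      if (i : ℕ) = (t : ℕ) then 0 else if (t : ℕ) < k then 2 else 3 := by
  by_cases hit : (i : ℕ) = (t : ℕ)
  · rw [if_pos hit]
    exact setDist_eq ⟨vz i, mem_partA_vz.mpr hit, by simp [D_vz_vz]⟩ fun w _ => Nat.zero_le _
  · rw [if_neg hit]
    by_cases ht : (t : ℕ) < k
    · rw [if_pos ht]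
      have hne : i ≠ ⟨t, ht⟩ := by
        intro hE; exact hit (by rw [hE])
      refine setDist_eq ⟨vz ⟨t, ht⟩, mem_partA_vz.mpr rfl, by simp [D_vz_vz, hne]⟩ ?_
      intro w hw
      rcases mem_partA_elim hw with ⟨j, rfl⟩ | ⟨j, rfl⟩ | ⟨j, rfl, hj⟩
      · simp [D, vx, vz]
      · simp [D, vy, vz]
      · have : i ≠ j := by rintro rfl; exact hit hj
        simp [D_vz_vz, this]
    · rw [if_neg ht]
      refine setDist_eq ⟨vx (t, t), mem_partA_vx.mpr rfl, by simp [D, vx, vz]⟩ ?_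
      intro w hw
      rcases mem_partA_elim hw with ⟨j, rfl⟩ | ⟨j, rfl⟩ | ⟨j, rfl, hj⟩
      · simp [D, vx, vz]
      · simp [D, vy, vz]
      · exact absurd (hj ▸ j.isLt) ht

lemma setDist_partA_vx (p : Fin (h - 1) × Fin (h - 1)) (t : Fin (h - 1)) :
    setDist (tStar k h) (vx p) (partA t) =
      if t = p.1 then 0 else if t = p.2 then 1 else 2 := by
  by_cases h1 : t = p.1
  · rw [if_pos h1]
    refine setDist_eq ⟨vx p, mem_partA_vx.mpr h1, by simp [D_vx_vx]⟩ fun w _ => Nat.zero_le _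
  · rw [if_neg h1]
    have hpx : ∀ j, p ≠ (t, j) := by rintro j rfl; exact h1 rfl
    by_cases h2 : t = p.2
    · rw [if_pos h2]
      have : vy (p.1, t) = (vy p : V k h) := by rw [h2]
      refine setDist_eq ⟨vy (p.1, t), mem_partA_vy.mpr rfl, by rw [this, D_vx_vy, if_pos rfl]⟩ ?_
      intro w hw
      rcases mem_partA_elim hw with ⟨j, rfl⟩ | ⟨j, rfl⟩ | ⟨j, rfl, hj⟩
      · simp [D_vx_vx, hpx j]
      · rw [D_vx_vy]; split_ifs <;> omega
      · simp [D, vx, vz]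
    · rw [if_neg h2]
      refine setDist_eq ⟨vx (t, p.2), mem_partA_vx.mpr rfl,
        by rw [D_vx_vx, if_neg (hpx p.2)]⟩ ?_
      intro w hw
      rcases mem_partA_elim hw with ⟨j, rfl⟩ | ⟨j, rfl⟩ | ⟨j, rfl, hj⟩
      · simp [D_vx_vx, hpx j]
      · have : p ≠ (j, t) := by rintro rfl; exact h2 rfl
        simp [D_vx_vy, this]
      · simp [D, vx, vz]

lemma setDist_partA_vy (p : Fin (h - 1) × Fin (h - 1)) (t : Fin (h - 1)) :
    setDist (tStar k h) (vy p) (partA t) =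
      if t = p.2 then 0 else if t = p.1 then 1 else 3 := by
  by_cases h2 : t = p.2
  · rw [if_pos h2]
    refine setDist_eq ⟨vy p, mem_partA_vy.mpr h2, by simp [D_vy_vy]⟩ fun w _ => Nat.zero_le _
  · rw [if_neg h2]
    have hpy : ∀ j, p ≠ (j, t) := by rintro j rfl; exact h2 rfl
    by_cases h1 : t = p.1
    · rw [if_pos h1]
      have hx : vx (t, p.2) = (vx p : V k h) := by rw [h1]
      refine setDist_eq ⟨vx (t, p.2), mem_partA_vx.mpr rfl,
        by rw [hx, D_vy_vx, if_pos rfl]⟩ ?_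
      intro w hw
      rcases mem_partA_elim hw with ⟨j, rfl⟩ | ⟨j, rfl⟩ | ⟨j, rfl, hj⟩
      · rw [D_vy_vx]; split_ifs <;> omega
      · simp [D_vy_vy, hpy j]
      · simp [D, vy, vz]
    · rw [if_neg h1]
      have hpx : ∀ j, p ≠ (t, j) := by rintro j rfl; exact h1 rfl
      refine setDist_eq ⟨vx (t, t), mem_partA_vx.mpr rfl,
        by rw [D_vy_vx, if_neg (hpx t)]⟩ ?_
      intro w hw
      rcases mem_partA_elim hw with ⟨j, rfl⟩ | ⟨j, rfl⟩ | ⟨j, rfl, hj⟩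
      · simp [D_vy_vx, hpx j]
      · simp [D_vy_vy, hpy j]
      · simp [D, vy, vz]

lemma cases_V (v : V k h) :
    v = vX ∨ v = vZ ∨ (∃ i, v = vz i) ∨ (∃ p, v = vx p) ∨ ∃ p, v = vy p := by
  rcases v with (⟨⟩|⟨⟩)|(i|(p|p))
  · exact Or.inl rfl
  · exact Or.inr (Or.inl rfl)
  · exact Or.inr (Or.inr (Or.inl ⟨i, rfl⟩))
  · exact Or.inr (Or.inr (Or.inr (Or.inl ⟨p, rfl⟩)))
  · exact Or.inr (Or.inr (Or.inr (Or.inr ⟨p, rfl⟩)))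

lemma ne_cases : (vX : V k h) ∉ partB → False := fun H => H (Or.inl rfl)

lemma vz_notMem_partB (i : Fin k) : (vz i : V k h) ∉ partB := by
  rintro (hc | hc) <;> simp [vz, vX, vZ] at hc
lemma vx_notMem_partB (p : Fin (h - 1) × Fin (h - 1)) : (vx p : V k h) ∉ partB := by
  rintro (hc | hc) <;> simp [vx, vX, vZ] at hc
lemma vy_notMem_partB (p : Fin (h - 1) × Fin (h - 1)) : (vy p : V k h) ∉ partB := by
  rintro (hc | hc) <;> simp [vy, vX, vZ] at hc

lemma mem_PP_elim {S : Set (V k h)} (hS : S ∈ PP k h) : S = partB ∨ ∃ t, S = partA t := by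
  rcases hS with rfl | ⟨t, rfl⟩
  · exact Or.inl rfl
  · exact Or.inr ⟨t, rfl⟩

lemma isPartition_PP (hh : k + 2 ≤ h) : Setoid.IsPartition (PP k h) := by
  constructor
  · intro h0
    rcases mem_PP_elim h0 with hB | ⟨t, hA⟩
    · exact (hB ▸ Set.notMem_empty (vX : V k h)) (Or.inl rfl)
    · exact (hA ▸ Set.notMem_empty (vx (t, t) : V k h)) (mem_partA_vx.mpr rfl)
  · intro v
    rcases cases_V v with rfl | rfl | ⟨i, rfl⟩ | ⟨p, rfl⟩ | ⟨p, rfl⟩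
    · refine ⟨partB, ⟨Set.mem_insert _ _, Or.inl rfl⟩, ?_⟩
      rintro S ⟨hS, hv⟩
      rcases mem_PP_elim hS with rfl | ⟨t, rfl⟩
      · rfl
      · exact absurd hv notMem_partA_vX
    · refine ⟨partB, ⟨Set.mem_insert _ _, Or.inr rfl⟩, ?_⟩
      rintro S ⟨hS, hv⟩
      rcases mem_PP_elim hS with rfl | ⟨t, rfl⟩
      · rfl
      · exact absurd hv notMem_partA_vZ
    · refine ⟨partA ⟨i, by omega⟩, ⟨Set.mem_insert_iff.mpr (Or.inr ⟨_, rfl⟩),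
        mem_partA_vz.mpr rfl⟩, ?_⟩
      rintro S ⟨hS, hv⟩
      rcases mem_PP_elim hS with rfl | ⟨t, rfl⟩
      · exact absurd hv (vz_notMem_partB i)
      · have hiv := mem_partA_vz.mp hv
        have ht : t = (⟨(i : ℕ), by omega⟩ : Fin (h - 1)) := by
          apply Fin.ext
          simpa using hiv.symm
        rw [ht]
    · refine ⟨partA p.1, ⟨Set.mem_insert_iff.mpr (Or.inr ⟨_, rfl⟩),
        mem_partA_vx.mpr rfl⟩, ?_⟩
      rintro S ⟨hS, hv⟩
      rcases mem_PP_elim hS with rfl | ⟨t, rfl⟩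
      · exact absurd hv (vx_notMem_partB p)
      · rw [mem_partA_vx.mp hv]
    · refine ⟨partA p.2, ⟨Set.mem_insert_iff.mpr (Or.inr ⟨_, rfl⟩),
        mem_partA_vy.mpr rfl⟩, ?_⟩
      rintro S ⟨hS, hv⟩
      rcases mem_PP_elim hS with rfl | ⟨t, rfl⟩
      · exact absurd hv (vy_notMem_partB p)
      · rw [mem_partA_vy.mp hv]

lemma partA_injective : Function.Injective (partA : Fin (h - 1) → Set (V k h)) := by
  intro a b hab
  have : (vx (a, a) : V k h) ∈ partA b := hab ▸ mem_partA_vx.mpr rfl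
  exact (mem_partA_vx.mp this).symm

lemma partB_notMem_range : partB ∉ Set.range (partA : Fin (h - 1) → Set (V k h)) := by
  rintro ⟨t, ht⟩
  have hvX : (vX : V k h) ∈ partB := Or.inl rfl
  rw [← ht] at hvX
  exact notMem_partA_vX hvX

lemma ncard_PP (hh : k + 2 ≤ h) : (PP k h).ncard = h := by
  have hfin : (Set.range (partA : Fin (h - 1) → Set (V k h))).Finite := Set.finite_range _
  rw [PP, Set.ncard_insert_of_notMem partB_notMem_range hfin]
  have : (Set.range (partA : Fin (h - 1) → Set (V k h))).ncard = Nat.card (Fin (h - 1)) :=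
    Nat.card_range_of_injective partA_injective
  rw [this]
  simp only [Nat.card_eq_fintype_card, Fintype.card_fin]
  omega

lemma locating_PP (hh : k + 2 ≤ h) :
    ∀ u v : V k h,
      (∀ S ∈ PP k h, setDist (tStar k h) u S = setDist (tStar k h) v S) → u = v := by
  have tk : Fin (h - 1) := ⟨k, by omega⟩
  intro u v H
  have HB := H partB (Set.mem_insert _ _)
  have HA : ∀ t, setDist (tStar k h) u (partA t) = setDist (tStar k h) v (partA t) :=
    fun t => H (partA t) (Set.mem_insert_iff.mpr (Or.inr ⟨t, rfl⟩))
  clear H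
  rcases cases_V u with rfl | rfl | ⟨i, rfl⟩ | ⟨p, rfl⟩ | ⟨p, rfl⟩ <;>
    rcases cases_V v with rfl | rfl | ⟨j, rfl⟩ | ⟨q, rfl⟩ | ⟨q, rfl⟩
  · rfl
  · -- X Z
    have hA := HA ⟨k, by omega⟩
    rw [setDist_partA_X, setDist_partA_Z] at hA
    simp at hA
  · rw [setDist_partB_X, setDist_partB_vz] at HB; omega
  · rw [setDist_partB_X, setDist_partB_vx] at HB; omega
  · rw [setDist_partB_X, setDist_partB_vy] at HB; omega
  · -- Z X
    have hA := HA ⟨k, by omega⟩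
    rw [setDist_partA_Z, setDist_partA_X] at hA
    simp at hA
  · rfl
  · rw [setDist_partB_Z, setDist_partB_vz] at HB; omega
  · rw [setDist_partB_Z, setDist_partB_vx] at HB; omega
  · rw [setDist_partB_Z, setDist_partB_vy] at HB; omega
  · rw [setDist_partB_vz, setDist_partB_X] at HB; omega
  · rw [setDist_partB_vz, setDist_partB_Z] at HB; omega
  · -- z z
    have hA := HA ⟨(i : ℕ), by omega⟩
    rw [setDist_partA_vz, setDist_partA_vz] at hA
    simp only [show (((⟨(i : ℕ), by omega⟩ : Fin (h - 1))) : ℕ) = (i : ℕ) from rfl] at hA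
    have hji : (j : ℕ) = (i : ℕ) := by
      by_contra hne
      split_ifs at hA <;> omega
    rw [show i = j from Fin.ext hji.symm]
  · -- z x
    have hA := HA ⟨k, by omega⟩
    rw [setDist_partA_vz, setDist_partA_vx] at hA
    simp only [show (((⟨k, by omega⟩ : Fin (h - 1))) : ℕ) = k from rfl] at hA
    have hik : ¬ (i : ℕ) = k := by omega
    rw [if_neg hik, if_neg (lt_irrefl k)] at hA
    split_ifs at hA <;> omega
  · rw [setDist_partB_vz, setDist_partB_vy] at HB; omega
  · rw [setDist_partB_vx, setDist_partB_X] at HB; omega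
  · rw [setDist_partB_vx, setDist_partB_Z] at HB; omega
  · -- x z
    have hA := HA ⟨k, by omega⟩
    rw [setDist_partA_vx, setDist_partA_vz] at hA
    simp only [show (((⟨k, by omega⟩ : Fin (h - 1))) : ℕ) = k from rfl] at hA
    have hjk : ¬ (j : ℕ) = k := by omega
    rw [if_neg hjk, if_neg (lt_irrefl k)] at hA
    split_ifs at hA <;> omega
  · -- x x
    have h1 := HA p.1
    rw [setDist_partA_vx, setDist_partA_vx, if_pos rfl] at h1
    have e1 : p.1 = q.1 := by
      by_contra hne
      rw [if_neg hne] at h1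
      split_ifs at h1 <;> omega
    by_cases hb : p.2 = p.1
    · have h2 := HA q.2
      rw [setDist_partA_vx, setDist_partA_vx] at h2
      by_cases hq : q.2 = p.1
      · exact congrArg vx (Prod.ext_iff.mpr ⟨e1, by rw [hb, hq]⟩)
      · rw [if_neg hq, if_neg (fun hc => hq (hc.trans hb)),
          if_neg (fun hc => hq (hc.trans e1.symm)), if_pos rfl] at h2
        omega
    · have h2 := HA p.2
      rw [setDist_partA_vx, setDist_partA_vx, if_neg hb, if_pos rfl] at h2
      have : ¬ p.2 = q.1 := fun hc => hb (by rw [hc, e1])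
      rw [if_neg this] at h2
      split_ifs at h2 with h3
      · exact congrArg vx (Prod.ext_iff.mpr ⟨e1, h3⟩)
      · omega
  · rw [setDist_partB_vx, setDist_partB_vy] at HB; omega
  · rw [setDist_partB_vy, setDist_partB_X] at HB; omega
  · rw [setDist_partB_vy, setDist_partB_Z] at HB; omega
  · rw [setDist_partB_vy, setDist_partB_vz] at HB; omega
  · rw [setDist_partB_vy, setDist_partB_vx] at HB; omega
  · -- y y
    have h1 := HA p.2
    rw [setDist_partA_vy, setDist_partA_vy, if_pos rfl] at h1
    have e2 : p.2 = q.2 := by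
      by_contra hne
      rw [if_neg hne] at h1
      split_ifs at h1 <;> omega
    by_cases ha : p.1 = p.2
    · have h2 := HA q.1
      rw [setDist_partA_vy, setDist_partA_vy] at h2
      by_cases hq : q.1 = p.2
      · exact congrArg vy (Prod.ext_iff.mpr ⟨by rw [ha, hq], e2⟩)
      · rw [if_neg hq, if_neg (fun hc => hq (hc.trans ha)),
          if_neg (fun hc => hq (hc.trans e2.symm)), if_pos rfl] at h2
        omega
    · have h2 := HA p.1
      rw [setDist_partA_vy, setDist_partA_vy, if_neg ha, if_pos rfl] at h2
      have : ¬ p.1 = q.2 := fun hc => ha (by rw [hc, e2])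
      rw [if_neg this] at h2
      split_ifs at h2 with h3
      · exact congrArg vy (Prod.ext_iff.mpr ⟨h3, e2⟩)
      · omega

lemma upper_bound (hh : k + 2 ≤ h) :
    h ∈ {n | ∃ P : Set (Set (V k h)), IsLocatingPartition (tStar k h) P ∧ P.ncard = n} :=
  ⟨PP k h, ⟨isPartition_PP hh, locating_PP hh⟩, ncard_PP hh⟩

end TStarUB

namespace TStarLB
open TStarAux TStarAux2 TStarUB

variable {k h : ℕ} {P : Set (Set (V k h))}

def cpart (hP : Setoid.IsPartition P) (v : V k h) : Set (V k h) :=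
  (hP.2 v).choose

lemma cpart_mem (hP : Setoid.IsPartition P) (v : V k h) : cpart hP v ∈ P :=
  (hP.2 v).choose_spec.1.1

lemma mem_cpart (hP : Setoid.IsPartition P) (v : V k h) : v ∈ cpart hP v :=
  (hP.2 v).choose_spec.1.2

lemma eq_cpart (hP : Setoid.IsPartition P) {v : V k h} {S : Set (V k h)}
    (hS : S ∈ P) (hv : v ∈ S) : S = cpart hP v :=
  (hP.2 v).choose_spec.2 S ⟨hS, hv⟩

lemma mem_iff_eq_cpart (hP : Setoid.IsPartition P) {v : V k h} {S : Set (V k h)}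
    (hS : S ∈ P) : v ∈ S ↔ S = cpart hP v :=
  ⟨fun hv => eq_cpart hP hS hv, fun hE => hE ▸ mem_cpart hP v⟩

lemma part_nonempty (hP : Setoid.IsPartition P) {S : Set (V k h)} (hS : S ∈ P) :
    S.Nonempty := by
  rcases Set.eq_empty_or_nonempty S with rfl | hne
  · exact absurd hS hP.1
  · exact hne

/-- distance formula from `y_p` to any part -/
lemma setDist_vy_formula (hP : Setoid.IsPartition P) (p : Fin (h - 1) × Fin (h - 1))
    {S : Set (V k h)} (hS : S ∈ P) :
    setDist (tStar k h) (vy p) S =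
      if vy p ∈ S then 0
      else if vx p ∈ S then 1
      else if vX ∈ S then 2
      else if vZ ∈ S ∨ ∃ r, r ≠ p ∧ vx r ∈ S then 3
      else 4 := by
  split_ifs with h0 h1 h2 h3
  · exact setDist_eq ⟨vy p, h0, D_self _⟩ fun w _ => Nat.zero_le _
  · refine setDist_eq ⟨vx p, h1, by rw [D_vy_vx, if_pos rfl]⟩ ?_
    intro w hw
    rcases cases_V w with rfl | rfl | ⟨i, rfl⟩ | ⟨r, rfl⟩ | ⟨r, rfl⟩
    · simp [D, vX, vy]
    · simp [D, vZ, vy]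
    · simp [D, vz, vy]
    · rw [D_vy_vx]; split_ifs <;> omega
    · rcases eq_or_ne r p with rfl | hr
      · exact absurd hw h0
      · rw [D_vy_vy, if_neg (Ne.symm hr)]; omega
  · refine setDist_eq ⟨vX, h2, by simp [D, vX, vy]⟩ ?_
    intro w hw
    rcases cases_V w with rfl | rfl | ⟨i, rfl⟩ | ⟨r, rfl⟩ | ⟨r, rfl⟩
    · simp [D, vX, vy]
    · simp [D, vZ, vy]
    · simp [D, vz, vy]
    · rcases eq_or_ne r p with rfl | hr
      · exact absurd hw h1
      · rw [D_vy_vx, if_neg (Ne.symm hr)]; omega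
    · rcases eq_or_ne r p with rfl | hr
      · exact absurd hw h0
      · rw [D_vy_vy, if_neg (Ne.symm hr)]; omega
  · have hlb : ∀ w ∈ S, 3 ≤ D (vy p) w := by
      intro w hw
      rcases cases_V w with rfl | rfl | ⟨i, rfl⟩ | ⟨r, rfl⟩ | ⟨r, rfl⟩
      · exact absurd hw h2
      · simp [D, vZ, vy]
      · simp [D, vz, vy]
      · rcases eq_or_ne r p with rfl | hr
        · exact absurd hw h1
        · rw [D_vy_vx, if_neg (Ne.symm hr)]
      · rcases eq_or_ne r p with rfl | hr
        · exact absurd hw h0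
        · rw [D_vy_vy, if_neg (Ne.symm hr)]; omega
    rcases h3 with hZ | ⟨r, hrp, hr⟩
    · exact setDist_eq ⟨vZ, hZ, by simp [D, vZ, vy]⟩ hlb
    · exact setDist_eq ⟨vx r, hr, by rw [D_vy_vx, if_neg (Ne.symm hrp)]⟩ hlb
  · push_neg at h3
    have hall : ∀ w ∈ S, D (vy p) w = 4 := by
      intro w hw
      rcases cases_V w with rfl | rfl | ⟨i, rfl⟩ | ⟨r, rfl⟩ | ⟨r, rfl⟩
      · exact absurd hw h2
      · exact absurd hw h3.1
      · simp [D, vz, vy]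
      · rcases eq_or_ne r p with rfl | hr
        · exact absurd hw h1
        · exact absurd hw (h3.2 r hr)
      · rcases eq_or_ne r p with rfl | hr
        · exact absurd hw h0
        · rw [D_vy_vy, if_neg (Ne.symm hr)]
    obtain ⟨w0, hw0⟩ := part_nonempty hP hS
    exact setDist_eq ⟨w0, hw0, hall w0 hw0⟩ fun w hw => (hall w hw).ge

/-- distance formula from `x_p` to any part containing some `x_r` -/
lemma setDist_vx_formula (hP : Setoid.IsPartition P) (p : Fin (h - 1) × Fin (h - 1))
    {S : Set (V k h)} (hS : S ∈ P) (hxS : ∃ r, vx r ∈ S) :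
    setDist (tStar k h) (vx p) S =
      if vx p ∈ S then 0
      else if vX ∈ S ∨ vy p ∈ S then 1
      else 2 := by
  split_ifs with h0 h1
  · exact setDist_eq ⟨vx p, h0, D_self _⟩ fun w _ => Nat.zero_le _
  · have hlb : ∀ w ∈ S, 1 ≤ D (vx p) w := by
      intro w hw
      rcases cases_V w with rfl | rfl | ⟨i, rfl⟩ | ⟨r, rfl⟩ | ⟨r, rfl⟩
      · simp [D, vX, vx]
      · simp [D, vZ, vx]
      · simp [D, vz, vx]
      · rcases eq_or_ne r p with rfl | hr
        · exact absurd hw h0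
        · rw [D_vx_vx, if_neg (Ne.symm hr)]; omega
      · rw [D_vx_vy]; split_ifs <;> omega
    rcases h1 with hX | hy
    · exact setDist_eq ⟨vX, hX, by simp [D, vX, vx]⟩ hlb
    · exact setDist_eq ⟨vy p, hy, by rw [D_vx_vy, if_pos rfl]⟩ hlb
  · push_neg at h1
    obtain ⟨r0, hr0⟩ := hxS
    have hr0p : r0 ≠ p := by rintro rfl; exact h0 hr0
    refine setDist_eq ⟨vx r0, hr0, by rw [D_vx_vx, if_neg (Ne.symm hr0p)]⟩ ?_
    intro w hw
    rcases cases_V w with rfl | rfl | ⟨i, rfl⟩ | ⟨r, rfl⟩ | ⟨r, rfl⟩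
    · exact absurd hw h1.1
    · simp [D, vZ, vx]
    · simp [D, vz, vx]
    · rcases eq_or_ne r p with rfl | hr
      · exact absurd hw h0
      · rw [D_vx_vx, if_neg (Ne.symm hr)]
    · rcases eq_or_ne r p with rfl | hr
      · exact absurd hw h1.2
      · rw [D_vx_vy, if_neg (Ne.symm hr)]; omega

lemma vy_injective : Function.Injective (vy : Fin (h - 1) × Fin (h - 1) → V k h) := by
  intro a b hab; simpa [vy] using hab

lemma vx_injective : Function.Injective (vx : Fin (h - 1) × Fin (h - 1) → V k h) := by
  intro a b hab; simpa [vx] using hab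

lemma color_injective (hP : IsLocatingPartition (tStar k h) P)
    {p q : Fin (h - 1) × Fin (h - 1)}
    (hcx : cpart hP.1 (vx p) = cpart hP.1 (vx q))
    (hcy : cpart hP.1 (vy p) = cpart hP.1 (vy q)) : p = q := by
  by_contra hne
  have key : ∀ S ∈ P, setDist (tStar k h) (vy p) S = setDist (tStar k h) (vy q) S := by
    intro S hS
    rw [setDist_vy_formula hP.1 p hS, setDist_vy_formula hP.1 q hS]
    have i1 : vy p ∈ S ↔ vy q ∈ S := by
      rw [mem_iff_eq_cpart hP.1 hS, mem_iff_eq_cpart hP.1 hS, hcy]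
    have i2 : vx p ∈ S ↔ vx q ∈ S := by
      rw [mem_iff_eq_cpart hP.1 hS, mem_iff_eq_cpart hP.1 hS, hcx]
    have i4 : (vZ ∈ S ∨ ∃ r, r ≠ p ∧ vx r ∈ S) ↔ (vZ ∈ S ∨ ∃ r, r ≠ q ∧ vx r ∈ S) := by
      constructor
      · rintro (hZ | ⟨r, hrp, hr⟩)
        · exact Or.inl hZ
        · rcases eq_or_ne r q with rfl | hrq
          · exact Or.inr ⟨p, hne, i2.mpr hr⟩
          · exact Or.inr ⟨r, hrq, hr⟩
      · rintro (hZ | ⟨r, hrq, hr⟩)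
        · exact Or.inl hZ
        · rcases eq_or_ne r p with rfl | hrp
          · exact Or.inr ⟨q, Ne.symm hne, i2.mp hr⟩
          · exact Or.inr ⟨r, hrp, hr⟩
    exact if_congr i1 rfl (if_congr i2 rfl (if_congr Iff.rfl rfl (if_congr i4 rfl rfl)))
  exact hne (vy_injective (hP.2 _ _ key))

lemma lower_bound (hk : 1 ≤ k) (hh : k + 2 ≤ h)
    (hP : IsLocatingPartition (tStar k h) P) : h ≤ P.ncard := by
  by_contra hlt
  push_neg at hlt
  have hPfin : Finite ↑P := Set.Finite.to_subtype (Set.toFinite P)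
  set F : Fin (h - 1) × Fin (h - 1) → ↑P × ↑P :=
    fun pq => (⟨cpart hP.1 (vx pq), cpart_mem hP.1 _⟩, ⟨cpart hP.1 (vy pq), cpart_mem hP.1 _⟩)
    with hF
  have hFinj : Function.Injective F := by
    intro p q hpq
    rw [hF] at hpq
    simp only [Prod.mk.injEq, Subtype.mk.injEq] at hpq
    exact color_injective hP hpq.1 hpq.2
  have hcard1 : Nat.card (Fin (h - 1) × Fin (h - 1)) ≤ Nat.card (↑P × ↑P) :=
    Nat.card_le_card_of_injective F hFinj
  have hcardP : Nat.card ↑P = P.ncard := Nat.card_coe_set_eq P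
  have hcards : (h - 1) * (h - 1) ≤ P.ncard * P.ncard := by
    rw [Nat.card_prod, Nat.card_prod, hcardP] at hcard1
    simpa using hcard1
  have hn : P.ncard = h - 1 := by
    rcases Nat.lt_or_ge (P.ncard) (h - 1) with hl | hg
    · nlinarith
    · omega
  -- `F` is bijective
  have hFbij : Function.Bijective F := by
    refine (Nat.bijective_iff_injective_and_card F).mpr ⟨hFinj, ?_⟩
    rw [Nat.card_prod, Nat.card_prod, hcardP, hn]
    simp
  -- every part contains some x_r
  have hallx : ∀ S ∈ P, ∃ r, vx r ∈ S := by
    intro S hS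
    obtain ⟨pq, hpq⟩ := hFbij.2 (⟨S, hS⟩, ⟨S, hS⟩)
    refine ⟨pq, ?_⟩
    have : cpart hP.1 (vx pq) = S := congrArg (Subtype.val ∘ Prod.fst) hpq
    exact this ▸ mem_cpart hP.1 _
  -- pick a part A different from the part of x
  have h2le : 1 < P.ncard := by omega
  obtain ⟨A, hA, hAne⟩ := Set.exists_ne_of_one_lt_ncard h2le (cpart hP.1 vX)
  obtain ⟨pa, hpa⟩ := hFbij.2 (⟨A, hA⟩, ⟨A, hA⟩)
  obtain ⟨pb, hpb⟩ := hFbij.2 (⟨A, hA⟩, ⟨cpart hP.1 vX, cpart_mem hP.1 _⟩)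
  simp only [hF, Prod.mk.injEq, Subtype.mk.injEq] at hpa hpb
  have hne : pa ≠ pb := by
    rintro rfl
    exact hAne (hpa.2.symm.trans hpb.2)
  have key : ∀ S ∈ P, setDist (tStar k h) (vx pa) S = setDist (tStar k h) (vx pb) S := by
    intro S hS
    rw [setDist_vx_formula hP.1 pa hS (hallx S hS), setDist_vx_formula hP.1 pb hS (hallx S hS)]
    have ma : vx pa ∈ S ↔ S = A := by rw [mem_iff_eq_cpart hP.1 hS, hpa.1]
    have mb : vx pb ∈ S ↔ S = A := by rw [mem_iff_eq_cpart hP.1 hS, hpb.1]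
    have mya : vy pa ∈ S ↔ S = A := by rw [mem_iff_eq_cpart hP.1 hS, hpa.2]
    have myb : vy pb ∈ S ↔ S = cpart hP.1 vX := by rw [mem_iff_eq_cpart hP.1 hS, hpb.2]
    by_cases hSA : S = A
    · rw [if_pos (ma.mpr hSA), if_pos (mb.mpr hSA)]
    · rw [if_neg (fun hc => hSA (ma.mp hc)), if_neg (fun hc => hSA (mb.mp hc))]
      by_cases hvX : vX ∈ S
      · rw [if_pos (Or.inl hvX), if_pos (Or.inl hvX)]
      · rw [if_neg, if_neg]
        · rintro (hc | hc)
          · exact hvX hc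
          · exact hvX ((myb.mp hc) ▸ mem_cpart hP.1 vX)
        · rintro (hc | hc)
          · exact hvX hc
          · exact hSA (mya.mp hc)
  exact hne (vx_injective (hP.2 _ _ key))

end TStarLB

/-- For integers `k ≥ 1` and `h ≥ k + 2`, the tree `T*(k,h)` has twin number `k`
and partition dimension `h`. -/
theorem tStar_twinNumber_partitionDim (k h : ℕ) (hk : 1 ≤ k) (hh : k + 2 ≤ h) :
    twinNumber (tStar k h) = k ∧ partitionDim (tStar k h) = h := by
  constructor
  · exact TStarAux3.twinNumber_eq hh hk
  · refine le_antisymm (Nat.sInf_le (TStarUB.upper_bound hh))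
      (le_csInf ⟨h, TStarUB.upper_bound hh⟩ ?_)
    rintro n ⟨P, hP, rfl⟩
    exact TStarLB.lower_bound hk hh hP
end
end

section
/- Let G be a finite connected simple graph of order n ≥ 2 that has a vertex u of degree k. Then β_p(G) ≤ n − min{k, n−1−k}. -/
open Classical SimpleGraph

noncomputable section

lemma setDist_singleton {V : Type*} (G : SimpleGraph V) (x v : V) :
    setDist G x {v} = G.dist x v := by
  simp [setDist]

lemma setDist_eq_zero_of_mem {V : Type*} (G : SimpleGraph V) {x : V} {S : Set V}
    (hx : x ∈ S) : setDist G x S = 0 :=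
  Nat.eq_zero_of_le_zero (Nat.sInf_le ⟨x, hx, SimpleGraph.dist_self⟩)

lemma mem_of_setDist_eq_zero {V : Type*} {G : SimpleGraph V} (hG : G.Connected)
    {x : V} {S : Set V} (hS : S.Nonempty) (h : setDist G x S = 0) : x ∈ S := by
  rcases Nat.sInf_eq_zero.mp h with h0 | h0
  · rcases h0 with ⟨w, hw, hd⟩
    rwa [hG.dist_eq_zero_iff.mp hd]
  · exact absurd h0 (by simp [Set.image_eq_empty, hS.ne_empty])

/-- If `G` is a connected graph of order `n ≥ 2` with a vertex of degree `k`,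
then `β_p(G) ≤ n - min k (n - 1 - k)`. -/
theorem partitionDim_le_of_degree {V : Type*} [Fintype V]
    (G : SimpleGraph V) (hG : G.Connected) (n : ℕ) (hn : Fintype.card V = n)
    (h2 : 2 ≤ n) (u : V) (k : ℕ) (hk : (G.neighborSet u).ncard = k) :
    partitionDim G ≤ n - min k (n - 1 - k) := by
  classical
  set N : Finset V := (G.neighborSet u).toFinset with hNdef
  have hNcard : N.card = k := by
    rw [hNdef, ← Set.ncard_eq_toFinset_card', hk]
  have huN : u ∉ N := by simp [hNdef]
  have hmemN : ∀ a ∈ N, G.Adj u a := by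
    intro a ha; rw [hNdef, Set.mem_toFinset] at ha; exact ha
  set C : Finset V := Finset.univ \ insert u N with hCdef
  have hkn : k + 1 ≤ n := by
    have := Finset.card_le_univ (insert u N)
    rwa [Finset.card_insert_of_notMem huN, hNcard, hn] at this
  have hCcard : C.card = n - 1 - k := by
    rw [hCdef, Finset.card_sdiff_of_subset (Finset.subset_univ _),
      Finset.card_insert_of_notMem huN, hNcard, Finset.card_univ, hn]
    omega
  set m := min k (n - 1 - k) with hm
  obtain ⟨A, hAN, hA⟩ := Finset.exists_subset_card_eq
    (show m ≤ N.card by rw [hNcard]; exact min_le_left _ _)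
  obtain ⟨B, hBC, hB⟩ := Finset.exists_subset_card_eq
    (show m ≤ C.card by rw [hCcard]; exact min_le_right _ _)
  have hBN : ∀ b ∈ B, b ∉ N ∧ b ≠ u := by
    intro b hb
    have := hBC hb
    rw [hCdef, Finset.mem_sdiff, Finset.mem_insert] at this
    exact ⟨fun h => this.2 (Or.inr h), fun h => this.2 (Or.inl h)⟩
  have hABdisj : ∀ x, x ∈ A → x ∉ B := fun x hxA hxB => (hBN x hxB).1 (hAN hxA)
  have huA : u ∉ A := fun h => huN (hAN h)
  have huB : u ∉ B := fun h => (hBN u h).2 rfl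
  let f : ↥A ≃ ↥B := Fintype.equivOfCardEq (by simp [hA, hB])
  set P : Set (Set V) :=
      (Set.range fun a : ↥A => ({(a : V), ((f a : V))} : Set V)) ∪
      ((fun x : V => ({x} : Set V)) '' {x : V | x ∉ A ∧ x ∉ B}) with hPdef
  -- uniqueness of parts
  have huniq : ∀ S ∈ P, ∀ T ∈ P, ∀ x : V, x ∈ S → x ∈ T → S = T := by
    rintro S (⟨a, rfl⟩ | ⟨y, ⟨hyA, hyB⟩, rfl⟩) T (⟨a', rfl⟩ | ⟨y', ⟨hy'A, hy'B⟩, rfl⟩) x hxS hxT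
    · rcases hxS with rfl | rfl <;> rcases hxT with h | h
      · rw [Subtype.coe_injective h]
      · exact absurd (f a').2 (h ▸ fun hb => hABdisj _ a.2 hb)
      · exact absurd a'.2 (h ▸ fun ha => hABdisj _ ha (f a).2)
      · rw [f.injective (Subtype.coe_injective h)]
    · rcases hxS with rfl | rfl
      · exact absurd a.2 (by rw [hxT]; exact hy'A)
      · exact absurd (f a).2 (by rw [hxT]; exact hy'B)
    · rcases hxT with rfl | rfl
      · exact absurd a'.2 (by rw [hxS]; exact hyA)
      · exact absurd (f a').2 (by rw [hxS]; exact hyB)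
    · rw [hxS] at hxT; rw [hxT]
  have hP : Setoid.IsPartition P := by
    constructor
    · rintro (⟨a, ha⟩ | ⟨y, _, hy⟩)
      · exact (Set.insert_nonempty _ _).ne_empty ha
      · exact (Set.singleton_nonempty y).ne_empty hy
    · intro x
      by_cases hxA : x ∈ A
      · refine ⟨{(x : V), ((f ⟨x, hxA⟩ : V))}, ⟨Or.inl ⟨⟨x, hxA⟩, rfl⟩, Or.inl rfl⟩, ?_⟩
        rintro T ⟨hT, hxT⟩
        exact huniq T hT _ (Or.inl ⟨⟨x, hxA⟩, rfl⟩) x hxT (Or.inl rfl)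
      by_cases hxB : x ∈ B
      · refine ⟨{(↑(f.symm ⟨x, hxB⟩) : V), ((f (f.symm ⟨x, hxB⟩) : V))},
          ⟨Or.inl ⟨f.symm ⟨x, hxB⟩, rfl⟩, Or.inr (by simp)⟩, ?_⟩
        rintro T ⟨hT, hxT⟩
        exact huniq T hT _ (Or.inl ⟨f.symm ⟨x, hxB⟩, rfl⟩) x hxT (Or.inr (by simp))
      · refine ⟨{x}, ⟨Or.inr ⟨x, ⟨hxA, hxB⟩, rfl⟩, rfl⟩, ?_⟩
        rintro T ⟨hT, hxT⟩
        exact huniq T hT _ (Or.inr ⟨x, ⟨hxA, hxB⟩, rfl⟩) x hxT rfl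
  have hloc : ∀ x y : V, (∀ S ∈ P, setDist G x S = setDist G y S) → x = y := by
    intro x y h
    have huP : ({u} : Set V) ∈ P := Or.inr ⟨u, ⟨huA, huB⟩, rfl⟩
    have hdu : G.dist x u = G.dist y u := by
      have := h _ huP; rwa [setDist_singleton, setDist_singleton] at this
    obtain ⟨S, ⟨hSP, hxS⟩, -⟩ := hP.2 x
    have hyS : y ∈ S := by
      refine mem_of_setDist_eq_zero hG ⟨x, hxS⟩ ?_
      rw [← h S hSP]; exact setDist_eq_zero_of_mem G hxS
    rcases hSP with ⟨a, rfl⟩ | ⟨z, -, rfl⟩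
    · have hda : G.dist (a : V) u = 1 :=
        SimpleGraph.dist_eq_one_iff_adj.mpr (hmemN _ (hAN a.2)).symm
      have hdb : G.dist ((f a : V)) u ≠ 1 := fun h1 =>
        (hBN _ (f a).2).1 (by
          rw [hNdef, Set.mem_toFinset]
          exact (SimpleGraph.dist_eq_one_iff_adj.mp h1).symm)
      rcases hxS with rfl | rfl <;> rcases hyS with rfl | rfl
      · rfl
      · exact absurd (hda ▸ hdu.symm) hdb
      · exact absurd (hda ▸ hdu) hdb
      · rfl
    · rw [hxS, hyS]
  have hcard : P.ncard ≤ n - m := by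
    have h1 : (Set.range fun a : ↥A => ({(a : V), ((f a : V))} : Set V)).ncard ≤ m := by
      rw [← Set.image_univ]
      refine le_trans (Set.ncard_image_le (Set.toFinite _)) ?_
      rw [Set.ncard_univ, Nat.card_eq_fintype_card, Fintype.card_coe, hA]
    have h2' : ((fun x : V => ({x} : Set V)) '' {x : V | x ∉ A ∧ x ∉ B}).ncard ≤ n - 2 * m := by
      refine le_trans (Set.ncard_image_le (Set.toFinite _)) ?_
      have : {x : V | x ∉ A ∧ x ∉ B} = ↑((A ∪ B)ᶜ) := by
        ext x; simp [not_or]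
      rw [this, Set.ncard_coe_finset, Finset.card_compl,
        Finset.card_union_of_disjoint (Finset.disjoint_left.mpr hABdisj), hA, hB, hn]
      omega
    refine le_trans (Set.ncard_union_le _ _) ?_
    omega
  have hfin : partitionDim G ≤ P.ncard := Nat.sInf_le ⟨P, ⟨hP, hloc⟩, rfl⟩
  exact hfin.trans hcard
end
end
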